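/- Let k > ℓ ≥ 0 and let S be a subset of the edge set of the k-uniform ℓ-cycle C_{n,k,ℓ}. Then the number of subhypergraphs of C_{n,k,ℓ} with exactly t edges all belonging to S, no isolated vertices, and exactly c connected components is at most C(k|S|, c) · (2·16^k)^t, where C(·,·) denotes the binomial coefficient. -/

import Mathlib

open Finset

/-- The `k`-uniform `ℓ`-cycle on vertex set `ZMod n`. -/
def cycleHG (n k ℓ : ℕ) : Finset (Finset (ZMod n)) :=
  (Finset.range (n / (k - ℓ))).image
    (fun i => (Finset.range k).image (fun j => (((k - ℓ) * i + j : ℕ) : ZMod n)))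

/-- Edge-connectivity of two vertices in the hypergraph with edge set `F`. -/
def EdgeConn {V : Type*} [DecidableEq V] (F : Finset (Finset V)) (u v : V) : Prop :=
  Relation.ReflTransGen (fun a b => ∃ e ∈ F, a ∈ e ∧ b ∈ e) u v

open Classical in
/-- The number of connected components of the hypergraph with edge set `F`. -/
noncomputable def compCount {V : Type*} [DecidableEq V] (F : Finset (Finset V)) : ℕ :=
  ((F.biUnion id).image (fun u => (F.biUnion id).filter (fun v => EdgeConn F u v))).card

namespace Stmt4Aux

open Classical

variable (n k l : ℕ)

/-- the `i`-th edge -/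
def E (i : ℕ) : Finset (ZMod n) :=
  (Finset.range k).image (fun j => (((k - l) * i + j : ℕ) : ZMod n))

def adj (i j : ℕ) : Prop := ((E n k l i) ∩ (E n k l j)).Nonempty

variable {n k l}

lemma mem_E {x : ZMod n} {i : ℕ} :
    x ∈ E n k l i ↔ ∃ a, a < k ∧ x = (((k - l) * i + a : ℕ) : ZMod n) := by
  simp [E, eq_comm]

lemma adj_symm {i j : ℕ} (h : adj n k l i j) : adj n k l j i := by
  unfold adj at *; rwa [Finset.inter_comm]

lemma mul_sub_eq {i j : ℕ} (hij : i ≤ j) : (k - l) * i + (k - l) * (j - i) = (k - l) * j := by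
  rw [← Nat.mul_add, Nat.add_sub_cancel' hij]

lemma klm_le (hlk : l < k) : (n / (k - l)) * (k - l) ≤ n := Nat.div_mul_le_self n (k - l)

lemma adj_of_le (hlk : l < k) (hkn : k < n) {i j : ℕ} (hij : i < j)
    (h : (k - l) * (j - i) ≤ k - 1) : adj n k l i j := by
  refine ⟨(((k - l) * j : ℕ) : ZMod n), Finset.mem_inter.2 ⟨?_, ?_⟩⟩
  · exact mem_E.2 ⟨(k - l) * (j - i), by omega, by rw [mul_sub_eq hij.le]⟩
  · exact mem_E.2 ⟨0, by omega, by rw [Nat.add_zero]⟩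

lemma adj_of_wrap (hlk : l < k) (hkn : k < n) {i j : ℕ} (hij : i < j)
    (hjm : j < n / (k - l)) (h : n - k + 1 ≤ (k - l) * (j - i)) : adj n k l i j := by
  have hD : (k - l) * (j - i) ≤ n - (k - l) := by
    have h1 : (k - l) * (j + 1) ≤ (k - l) * (n / (k - l)) := Nat.mul_le_mul_left _ (by omega)
    have h0 := klm_le (n := n) hlk
    rw [Nat.mul_comm (n / (k-l)) (k-l)] at h0
    rw [Nat.mul_add] at h1
    have : (k - l) * (j - i) ≤ (k - l) * j := Nat.mul_le_mul_left _ (by omega)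
    omega
  refine ⟨(((k - l) * i : ℕ) : ZMod n), Finset.mem_inter.2 ⟨?_, ?_⟩⟩
  · exact mem_E.2 ⟨0, by omega, by rw [Nat.add_zero]⟩
  · refine mem_E.2 ⟨n - (k - l) * (j - i), by omega, ?_⟩
    have key : ((k - l) * i : ℕ) + n = (k - l) * j + (n - (k - l) * (j - i)) := by
      have := mul_sub_eq (k := k) (l := l) hij.le
      omega
    have : (((k - l) * i + n : ℕ) : ZMod n) = (((k - l) * j + (n - (k - l) * (j - i)) : ℕ) : ZMod n) := by
      rw [key]
    rwa [Nat.cast_add, ZMod.natCast_self, add_zero] at this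

lemma adj_char (hlk : l < k) (hkn : k < n) {i j : ℕ} (hij : i < j)
    (hjm : j < n / (k - l)) (h : adj n k l i j) :
    (k - l) * (j - i) ≤ k - 1 ∨ n - k + 1 ≤ (k - l) * (j - i) := by
  obtain ⟨x, hx⟩ := h
  rw [Finset.mem_inter] at hx
  obtain ⟨a, ha, hxa⟩ := mem_E.1 hx.1
  obtain ⟨b, hb, hxb⟩ := mem_E.1 hx.2
  set D := (k - l) * (j - i) with hD
  have hDle : D ≤ n - (k - l) := by
    have h1 : (k - l) * (j + 1) ≤ (k - l) * (n / (k - l)) := Nat.mul_le_mul_left _ (by omega)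
    have := klm_le (n := n) hlk
    rw [Nat.mul_comm (n / (k-l)) (k-l)] at this
    rw [Nat.mul_add] at h1
    have : (k - l) * (j - i) ≤ (k - l) * j := Nat.mul_le_mul_left _ (by omega)
    omega
  have hsum : (k - l) * i + D = (k - l) * j := mul_sub_eq hij.le
  have heq : (((k - l) * i + a : ℕ) : ZMod n) = (((k - l) * i + (D + b) : ℕ) : ZMod n) := by
    rw [← hxa, hxb]; congr 1; omega
  have hmod : ((k - l) * i + a) % n = ((k - l) * i + (D + b)) % n :=
    (ZMod.natCast_eq_natCast_iff _ _ _).1 heq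
  have hmod2 : a % n = (D + b) % n :=
    Nat.ModEq.add_left_cancel (Nat.ModEq.refl ((k - l) * i)) hmod
  have ha' : a % n = a := Nat.mod_eq_of_lt (by omega)
  have hDpos : 1 ≤ D := by
    have : 1 ≤ j - i := by omega
    calc 1 ≤ (k - l) * 1 := by omega
    _ ≤ D := Nat.mul_le_mul_left _ this
  by_cases hcase : D + b < n
  · rw [ha', Nat.mod_eq_of_lt hcase] at hmod2
    left; omega
  · have : (D + b) % n = D + b - n := by
      rw [Nat.mod_eq_sub_mod (by omega), Nat.mod_eq_of_lt (by omega)]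
    rw [ha', this] at hmod2
    right; omega


lemma klj_le (hlk : l < k) {j : ℕ} (hjm : j < n / (k - l)) : (k - l) * j ≤ n - (k - l) := by
  have h1 : (k - l) * (j + 1) ≤ (k - l) * (n / (k - l)) := Nat.mul_le_mul_left _ (by omega)
  have h0 := klm_le (n := n) hlk
  rw [Nat.mul_comm (n / (k-l)) (k-l)] at h0
  rw [Nat.mul_add] at h1
  omega

lemma start_mem_E (hlk : l < k) {i : ℕ} : (((k - l) * i : ℕ) : ZMod n) ∈ E n k l i :=
  mem_E.2 ⟨0, by omega, by rw [Nat.add_zero]⟩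

lemma eq_start (hkn : k < n) {i : ℕ} {x : ZMod n} (hx : x ∈ E n k l i)
    (h : x - 1 ∉ E n k l i) : x = (((k - l) * i : ℕ) : ZMod n) := by
  obtain ⟨a, ha, rfl⟩ := mem_E.1 hx
  rcases Nat.eq_zero_or_pos a with rfl | hapos
  · rw [Nat.add_zero]
  · exfalso
    apply h
    refine mem_E.2 ⟨a - 1, by omega, ?_⟩
    have : ((k - l) * i + a : ℕ) = ((k - l) * i + (a - 1)) + 1 := by omega
    rw [this, Nat.cast_add, Nat.cast_one, add_sub_cancel_right]

lemma pred_start_not_mem (hkn : k < n) {i : ℕ} :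
    (((k - l) * i : ℕ) : ZMod n) - 1 ∉ E n k l i := by
  intro hmem
  obtain ⟨a, ha, heq⟩ := mem_E.1 hmem
  have : (((k - l) * i : ℕ) : ZMod n) = (((k - l) * i + a + 1 : ℕ) : ZMod n) := by
    push_cast
    push_cast at heq
    linear_combination heq
  have hmod := (ZMod.natCast_eq_natCast_iff _ _ _).1 this
  have hmod2 : 0 % n = (a + 1) % n := by
    have : (k - l) * i + 0 ≡ (k - l) * i + (a + 1) [MOD n] := by
      simpa [Nat.add_assoc] using hmod
    exact Nat.ModEq.add_left_cancel (Nat.ModEq.refl ((k - l) * i)) this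
  rw [Nat.zero_mod, Nat.mod_eq_of_lt (by omega)] at hmod2
  omega

lemma E_inj_aux (hlk : l < k) (hkn : k < n) {i j : ℕ} (hij : i ≤ j)
    (hjm : j < n / (k - l)) (him : i < n / (k - l)) (h : E n k l i = E n k l j) : i = j := by
  have h1 : (((k - l) * j : ℕ) : ZMod n) ∈ E n k l i := h ▸ start_mem_E hlk
  have h2 : (((k - l) * j : ℕ) : ZMod n) - 1 ∉ E n k l i := by
    rw [h]; exact pred_start_not_mem hkn
  have h3 := eq_start hkn h1 h2
  have hmod := (ZMod.natCast_eq_natCast_iff _ _ _).1 h3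
  have hi : (k - l) * i < n := by have := klj_le (n := n) hlk him; omega
  have hj : (k - l) * j < n := by have := klj_le (n := n) hlk hjm; omega
  rw [Nat.ModEq, Nat.mod_eq_of_lt hi, Nat.mod_eq_of_lt hj] at hmod
  exact Nat.eq_of_mul_eq_mul_left (by omega) hmod.symm

lemma E_inj (hlk : l < k) (hkn : k < n) {i j : ℕ} (him : i < n / (k - l))
    (hjm : j < n / (k - l)) (h : E n k l i = E n k l j) : i = j := by
  rcases le_total i j with hij | hij
  · exact E_inj_aux hlk hkn hij hjm him h
  · exact (E_inj_aux hlk hkn hij him hjm h.symm).symm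

lemma adj_gap (hlk : l < k) (hkn : k < n) {i j : ℕ} (hij : i < j)
    (hjm : j < n / (k - l)) (h : adj n k l i j) :
    j - i ≤ (k - 1) / (k - l) ∨ (n / (k - l)) - (j - i) ≤ (k - 1) / (k - l) := by
  have hd : 0 < k - l := by omega
  rcases adj_char hlk hkn hij hjm h with h1 | h1
  · left
    rw [Nat.le_div_iff_mul_le hd, Nat.mul_comm]
    exact h1
  · right
    rw [Nat.le_div_iff_mul_le hd, Nat.mul_comm]
    have hsplit : (k - l) * ((n / (k - l)) - (j - i)) + (k - l) * (j - i) = (k - l) * (n / (k - l)) := by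
      rw [← Nat.mul_add]
      congr 1
      omega
    have h0 := klm_le (n := n) hlk
    rw [Nat.mul_comm (n / (k-l)) (k-l)] at h0
    omega

lemma rr_mul (hlk : l < k) : (k - l) * ((k - 1) / (k - l)) ≤ k - 1 := by
  rw [Nat.mul_comm]
  exact Nat.div_mul_le_self _ _

lemma adj_of_gap (hlk : l < k) (hkn : k < n) {i j : ℕ} (hij : i < j)
    (h : j - i ≤ (k - 1) / (k - l)) : adj n k l i j := by
  apply adj_of_le hlk hkn hij
  calc (k - l) * (j - i) ≤ (k - l) * ((k - 1) / (k - l)) := Nat.mul_le_mul_left _ h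
  _ ≤ k - 1 := rr_mul hlk

/-! ### components on index sets -/

variable (n k l)

def Step (Y : Finset ℕ) (a b : ℕ) : Prop := a ∈ Y ∧ b ∈ Y ∧ adj n k l a b

def IRel (Y : Finset ℕ) (a b : ℕ) : Prop := Relation.ReflTransGen (Step n k l Y) a b

open scoped Classical in
noncomputable def comp (Y : Finset ℕ) (i : ℕ) : Finset ℕ := Y.filter (fun j => IRel n k l Y i j)

lemma Step_symm {Y : Finset ℕ} : Symmetric (Step n k l Y) := by
  rintro a b ⟨ha, hb, hadj⟩; exact ⟨hb, ha, adj_symm hadj⟩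

lemma IRel_symm {Y : Finset ℕ} {a b : ℕ} (h : IRel n k l Y a b) : IRel n k l Y b a :=
  (fun hh => @Std.Symm.symm _ _ (@Relation.ReflTransGen.stdSymm _ _ ⟨fun _ _ h0 => Step_symm n k l h0⟩) _ _ hh) h

lemma IRel_trans {Y : Finset ℕ} {a b c : ℕ} (h : IRel n k l Y a b) (h2 : IRel n k l Y b c) :
    IRel n k l Y a c := Relation.ReflTransGen.trans h h2
variable {n k l}

lemma mem_comp {Y : Finset ℕ} {i j : ℕ} : j ∈ comp n k l Y i ↔ j ∈ Y ∧ IRel n k l Y i j := by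
  simp [comp]

lemma comp_subset {Y : Finset ℕ} {i : ℕ} : comp n k l Y i ⊆ Y := Finset.filter_subset _ _

lemma mem_comp_self {Y : Finset ℕ} {i : ℕ} (hi : i ∈ Y) : i ∈ comp n k l Y i :=
  mem_comp.2 ⟨hi, Relation.ReflTransGen.refl⟩

lemma comp_eq_of_mem {Y : Finset ℕ} {i j : ℕ} (hj : j ∈ comp n k l Y i) :
    comp n k l Y j = comp n k l Y i := by
  obtain ⟨hjY, hij⟩ := mem_comp.1 hj
  ext z
  simp only [mem_comp]
  constructor
  · rintro ⟨hz, h2⟩; exact ⟨hz, IRel_trans n k l hij h2⟩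
  · rintro ⟨hz, h2⟩; exact ⟨hz, IRel_trans n k l (IRel_symm n k l hij) h2⟩

lemma IRel_mono {Y Y' : Finset ℕ} (h : Y' ⊆ Y) {a b : ℕ} (hr : IRel n k l Y' a b) :
    IRel n k l Y a b :=
  Relation.ReflTransGen.mono (r := Step n k l Y') (p := Step n k l Y)
    (fun x y ⟨hx, hy, hadj⟩ => ⟨h hx, h hy, hadj⟩) _ _ hr

lemma conn_in_comp {Y : Finset ℕ} {i x : ℕ} (hi : i ∈ Y) (h : IRel n k l Y i x) :
    Relation.ReflTransGen (Step n k l (comp n k l Y i)) i x := by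
  induction h with
  | refl => exact Relation.ReflTransGen.refl
  | @tail b c hab hbc ih =>
    refine Relation.ReflTransGen.tail ih ⟨?_, ?_, hbc.2.2⟩
    · exact mem_comp.2 ⟨hbc.1, hab⟩
    · exact mem_comp.2 ⟨hbc.2.1, Relation.ReflTransGen.tail hab hbc⟩

lemma comp_pairwise_conn {Y : Finset ℕ} {i x y : ℕ} (hi : i ∈ Y) (hx : x ∈ comp n k l Y i)
    (hy : y ∈ comp n k l Y i) :
    Relation.ReflTransGen (Step n k l (comp n k l Y i)) x y := by
  have h1 := conn_in_comp hi (mem_comp.1 hx).2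
  have h2 := conn_in_comp hi (mem_comp.1 hy).2
  exact Relation.ReflTransGen.trans
    ((fun hh => @Std.Symm.symm _ _ (@Relation.ReflTransGen.stdSymm _ _ ⟨fun _ _ h0 => Step_symm n k l h0⟩) _ _ hh) h1) h2

lemma comp_erase_eq {Y : Finset ℕ} {z f : ℕ} (hz : z ∈ Y) (hf : f ∉ comp n k l Y z) :
    comp n k l (Y.erase f) z = comp n k l Y z := by
  apply Finset.Subset.antisymm
  · intro j hj
    obtain ⟨hjY, hrel⟩ := mem_comp.1 hj
    exact mem_comp.2 ⟨Finset.mem_of_mem_erase hjY, IRel_mono (Finset.erase_subset _ _) hrel⟩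
  · intro j hj
    obtain ⟨hjY, hrel⟩ := mem_comp.1 hj
    have hpath := conn_in_comp hz hrel
    have hsub : comp n k l Y z ⊆ Y.erase f := by
      intro w hw
      exact Finset.mem_erase.2 ⟨fun he => hf (he ▸ hw), comp_subset hw⟩
    refine mem_comp.2 ⟨Finset.mem_erase.2 ⟨fun he => hf (he ▸ hj), hjY⟩, ?_⟩
    exact Relation.ReflTransGen.mono (r := Step n k l (comp n k l Y z)) (p := Step n k l (Y.erase f))
      (fun x y ⟨hx, hy, hadj⟩ => ⟨hsub hx, hsub hy, hadj⟩) _ _ hpath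

lemma exists_cross {Y A : Finset ℕ} {x y : ℕ} (hpath : Relation.ReflTransGen (Step n k l Y) x y)
    (hx : x ∈ A) (hy : y ∉ A) :
    ∃ a b, a ∈ A ∧ a ∈ Y ∧ b ∈ Y ∧ b ∉ A ∧ adj n k l a b := by
  induction hpath using Relation.ReflTransGen.head_induction_on with
  | refl => exact absurd hx hy
  | @head a c hac hcy ih =>
    by_cases hc : c ∈ A
    · exact ih hc
    · exact ⟨a, c, hx, hac.1, hac.2.1, hc, hac.2.2⟩

lemma chain_conn (hlk : l < k) (hkn : k < n) {D : Finset ℕ} (hne : D.Nonempty)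
    (H : ∀ x ∈ D, x ≠ D.max' hne → ∃ z ∈ D, x < z ∧ z ≤ x + (k - 1) / (k - l)) :
    ∀ x ∈ D, Relation.ReflTransGen (Step n k l D) x (D.max' hne) := by
  have key : ∀ N, ∀ x ∈ D, D.max' hne - x ≤ N →
      Relation.ReflTransGen (Step n k l D) x (D.max' hne) := by
    intro N
    induction N with
    | zero =>
      intro x hx hle
      have := Finset.le_max' D x hx
      have : x = D.max' hne := by omega
      rw [this]
    | succ N ih =>
      intro x hx hle
      by_cases hxm : x = D.max' hne
      · rw [hxm]
      · obtain ⟨z, hzD, hxz, hzr⟩ := H x hx hxm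
        refine Relation.ReflTransGen.head ⟨hx, hzD, adj_of_gap hlk hkn hxz (by omega)⟩ ?_
        apply ih z hzD
        have := Finset.le_max' D z hzD
        have := Finset.le_max' D x hx
        omega
  intro x hx
  exact key (D.max' hne - x) x hx le_rfl


/-! ### term and root of a component -/

variable (n k l)

def Conn (Y : Finset ℕ) : Prop :=
  ∀ x ∈ Y, ∀ y ∈ Y, Relation.ReflTransGen (Step n k l Y) x y

open scoped Classical in
noncomputable def bigs (C : Finset ℕ) : Finset ℕ :=
  C.filter (fun x => (∃ y ∈ C, x < y) ∧ ∀ z ∈ C, z ≤ x ∨ x + (k - 1) / (k - l) < z)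

noncomputable def term (C : Finset ℕ) : ℕ :=
  if h : (bigs k l C).Nonempty then (bigs k l C).min' h
  else if h2 : C.Nonempty then C.max' h2 else 0

noncomputable def root (C : Finset ℕ) : ℕ :=
  if h : (C.filter (fun y => term k l C < y)).Nonempty then
    (C.filter (fun y => term k l C < y)).min' h
  else if h2 : C.Nonempty then C.min' h2 else 0

variable {n k l}

lemma mem_bigs {C : Finset ℕ} {x : ℕ} :
    x ∈ bigs k l C ↔ x ∈ C ∧ (∃ y ∈ C, x < y) ∧ ∀ z ∈ C, z ≤ x ∨ x + (k - 1) / (k - l) < z := by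
  simp [bigs]

lemma bigs_subset {C : Finset ℕ} : bigs k l C ⊆ C := Finset.filter_subset _ _

lemma notbig {C : Finset ℕ} {x : ℕ} (hx : x ∈ C) (hy : ∃ y ∈ C, x < y)
    (h : x ∉ bigs k l C) : ∃ z ∈ C, x < z ∧ z ≤ x + (k - 1) / (k - l) := by
  rw [mem_bigs] at h
  push_neg at h
  obtain ⟨z, hz, h1, h2⟩ := h hx hy
  exact ⟨z, hz, h1, h2⟩

lemma term_of_bigs_empty {C : Finset ℕ} (h : bigs k l C = ∅) (hne : C.Nonempty) :
    term k l C = C.max' hne := by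
  rw [term, dif_neg (by simp [h]), dif_pos hne]

lemma term_of_bigs {C : Finset ℕ} {w : ℕ} (hw : w ∈ bigs k l C)
    (hs : ∀ x ∈ bigs k l C, x = w) : term k l C = w := by
  have hne : (bigs k l C).Nonempty := ⟨w, hw⟩
  rw [term, dif_pos hne]
  exact hs _ ((bigs k l C).min'_mem hne)

lemma term_mem {C : Finset ℕ} (hne : C.Nonempty) : term k l C ∈ C := by
  rw [term]
  split
  · exact bigs_subset ((bigs k l C).min'_mem ‹_›)
  · exact C.max'_mem hne

lemma root_mem {C : Finset ℕ} (hne : C.Nonempty) : root k l C ∈ C := by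
  rw [root]
  split
  · exact Finset.filter_subset _ _ ((C.filter _).min'_mem ‹_›)
  · exact C.min'_mem hne

lemma root_of_above {C : Finset ℕ} (h : (C.filter (fun y => term k l C < y)).Nonempty) :
    root k l C = (C.filter (fun y => term k l C < y)).min' h := by
  rw [root, dif_pos h]

lemma root_of_no_above {C : Finset ℕ} (h : ¬ (C.filter (fun y => term k l C < y)).Nonempty)
    (hne : C.Nonempty) : root k l C = C.min' hne := by
  rw [root, dif_neg h, dif_pos hne]

lemma conn_of_chain (hlk : l < k) (hkn : k < n) {D : Finset ℕ} (hne : D.Nonempty)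
    (H : ∀ x ∈ D, x ≠ D.max' hne → ∃ z ∈ D, x < z ∧ z ≤ x + (k - 1) / (k - l)) :
    Conn n k l D := by
  intro x hx y hy
  have h1 := chain_conn hlk hkn hne H x hx
  have h2 := chain_conn hlk hkn hne H y hy
  exact Relation.ReflTransGen.trans h1
    ((fun hh => @Std.Symm.symm _ _ (@Relation.ReflTransGen.stdSymm _ _ ⟨fun _ _ h0 => Step_symm n k l h0⟩) _ _ hh) h2)

lemma bigs_subsingleton (hlk : l < k) (hkn : k < n) {C : Finset ℕ}
    (hC : C ⊆ Finset.range (n / (k - l))) (hconn : Conn n k l C) :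
    ∀ w₁ ∈ bigs k l C, ∀ w₂ ∈ bigs k l C, w₁ = w₂ := by
  have main : ∀ w₁ ∈ bigs k l C, ∀ w₂ ∈ bigs k l C, w₁ < w₂ → False := by
    intro w₁ hw₁ w₂ hw₂ hlt
    obtain ⟨hw₁C, ⟨y₁, hy₁C, hy₁⟩, hbig₁⟩ := mem_bigs.1 hw₁
    obtain ⟨hw₂C, ⟨y₂, hy₂C, hy₂⟩, hbig₂⟩ := mem_bigs.1 hw₂
    set A := C.filter (fun z => w₁ < z ∧ z ≤ w₂) with hA
    have hw₂A : w₂ ∈ A := Finset.mem_filter.2 ⟨hw₂C, hlt, le_rfl⟩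
    have hw₁A : w₁ ∉ A := fun h => by simp [hA, Finset.mem_filter] at h
    obtain ⟨a, b, haA, haC, hbC, hbA, hadj⟩ :=
      exists_cross (hconn w₂ hw₂C w₁ hw₁C) hw₂A hw₁A
    obtain ⟨-, ha1, ha2⟩ := Finset.mem_filter.1 haA
    have hbm := Finset.mem_range.1 (hC hbC)
    have ham := Finset.mem_range.1 (hC haC)
    have hy₂m := Finset.mem_range.1 (hC hy₂C)
    have hy₂big : w₂ + (k - 1) / (k - l) < y₂ := by
      rcases hbig₂ y₂ hy₂C with h | h
      · omega
      · exact h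
    have hb : b ≤ w₁ ∨ w₂ < b := by
      by_contra hcon
      push_neg at hcon
      exact hbA (Finset.mem_filter.2 ⟨hbC, by omega, by omega⟩)
    have habig : w₁ + (k - 1) / (k - l) < a := by
      rcases hbig₁ a haC with h | h
      · omega
      · exact h
    rcases hb with hb | hb
    · -- b ≤ w₁ < a
      have := adj_gap hlk hkn (show b < a by omega) ham (adj_symm hadj)
      omega
    · -- a ≤ w₂ < b
      have hbbig : w₂ + (k - 1) / (k - l) < b := by
        rcases hbig₂ b hbC with h | h
        · omega
        · exact h
      have := adj_gap hlk hkn (show a < b by omega) hbm hadj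
      omega
  intro w₁ hw₁ w₂ hw₂
  rcases lt_trichotomy w₁ w₂ with h | h | h
  · exact absurd (main w₁ hw₁ w₂ hw₂ h) not_false
  · exact h
  · exact absurd (main w₂ hw₂ w₁ hw₁ h) not_false

lemma cross_of_big (hlk : l < k) (hkn : k < n) {C : Finset ℕ}
    (hC : C ⊆ Finset.range (n / (k - l))) (hconn : Conn n k l C) {w : ℕ}
    (hw : w ∈ bigs k l C) :
    ∃ a b, a ∈ C ∧ b ∈ C ∧ a ≤ w ∧ w < b ∧ adj n k l a b := by
  obtain ⟨hwC, ⟨y, hyC, hy⟩, hbig⟩ := mem_bigs.1 hw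
  set A := C.filter (fun z => z ≤ w) with hA
  have hwA : w ∈ A := Finset.mem_filter.2 ⟨hwC, le_rfl⟩
  have hyA : y ∉ A := fun h => by
    have := (Finset.mem_filter.1 h).2; omega
  obtain ⟨a, b, haA, haC, hbC, hbA, hadj⟩ := exists_cross (hconn w hwC y hyC) hwA hyA
  have ha := (Finset.mem_filter.1 haA).2
  have hb : w < b := by
    by_contra hcon
    push_neg at hcon
    exact hbA (Finset.mem_filter.2 ⟨hbC, hcon⟩)
  exact ⟨a, b, haC, hbC, ha, hb, hadj⟩

lemma wrap_le (hlk : l < k) (hkn : k < n) {C : Finset ℕ}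
    (hC : C ⊆ Finset.range (n / (k - l))) (hconn : Conn n k l C) {w : ℕ}
    (hw : w ∈ bigs k l C) (hne : C.Nonempty) :
    C.min' hne + (n / (k - l) - C.max' hne) ≤ (k - 1) / (k - l) := by
  obtain ⟨a, b, haC, hbC, ha, hb, hadj⟩ := cross_of_big hlk hkn hC hconn hw
  obtain ⟨-, -, hbig⟩ := mem_bigs.1 hw
  have hbbig : w + (k - 1) / (k - l) < b := by
    rcases hbig b hbC with h | h
    · omega
    · exact h
  have hbm := Finset.mem_range.1 (hC hbC)
  have := adj_gap hlk hkn (show a < b by omega) hbm hadj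
  have h1 := Finset.min'_le C a haC
  have h2 := Finset.le_max' C b hbC
  have h3 := Finset.mem_range.1 (hC (C.max'_mem hne))
  omega

lemma adj_min_max (hlk : l < k) (hkn : k < n) {C : Finset ℕ}
    (hC : C ⊆ Finset.range (n / (k - l))) (hconn : Conn n k l C) {w : ℕ}
    (hw : w ∈ bigs k l C) (hne : C.Nonempty) :
    adj n k l (C.min' hne) (C.max' hne) := by
  obtain ⟨a, b, haC, hbC, ha, hb, hadj⟩ := cross_of_big hlk hkn hC hconn hw
  obtain ⟨-, -, hbig⟩ := mem_bigs.1 hw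
  have hbbig : w + (k - 1) / (k - l) < b := by
    rcases hbig b hbC with h | h
    · omega
    · exact h
  have hbm := Finset.mem_range.1 (hC hbC)
  have ham := Finset.mem_range.1 (hC haC)
  have hwrap : n - k + 1 ≤ (k - l) * (b - a) := by
    rcases adj_char hlk hkn (show a < b by omega) hbm hadj with h | h
    · exfalso
      have : b - a ≤ (k - 1) / (k - l) := by
        rw [Nat.le_div_iff_mul_le (by omega : 0 < k - l), Nat.mul_comm]
        exact h
      omega
    · exact h
  have h1 := Finset.min'_le C a haC
  have h2 := Finset.le_max' C b hbC
  have h3 := Finset.mem_range.1 (hC (C.max'_mem hne))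
  apply adj_of_wrap hlk hkn (show C.min' hne < C.max' hne by omega) (by omega)
  calc n - k + 1 ≤ (k - l) * (b - a) := hwrap
  _ ≤ (k - l) * (C.max' hne - C.min' hne) := Nat.mul_le_mul_left _ (by omega)


/-! ### the singleton case -/

lemma term_singleton {x : ℕ} : term k l ({x} : Finset ℕ) = x := by
  have hb : bigs k l ({x} : Finset ℕ) = ∅ := by
    ext z
    simp only [mem_bigs, Finset.mem_singleton, Finset.notMem_empty, iff_false]
    rintro ⟨rfl, ⟨y, rfl, hy⟩, -⟩
    omega
  rw [term_of_bigs_empty hb ⟨x, Finset.mem_singleton_self x⟩]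
  simp

lemma root_singleton {x : ℕ} : root k l ({x} : Finset ℕ) = x := by
  have hne : ({x} : Finset ℕ).Nonempty := ⟨x, Finset.mem_singleton_self x⟩
  have h : (({x} : Finset ℕ).filter (fun y => term k l ({x} : Finset ℕ) < y)) = ∅ := by
    ext z
    simp only [Finset.mem_filter, Finset.mem_singleton, Finset.notMem_empty, iff_false,
      term_singleton]
    rintro ⟨rfl, hz⟩
    omega
  rw [root_of_no_above (by simp [h]) hne]
  simp

/-! ### the erase lemma -/

lemma erase_struct (hlk : l < k) (hkn : k < n) {C : Finset ℕ}
    (hC : C ⊆ Finset.range (n / (k - l))) (hconn : Conn n k l C) (hcard : 2 ≤ C.card) :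
    term k l C ∈ C ∧
    Conn n k l (C.erase (term k l C)) ∧
    root k l (C.erase (term k l C)) = root k l C ∧
    (1 ≤ (term k l C + n / (k - l) - term k l (C.erase (term k l C))) % (n / (k - l)) ∧
     (term k l C + n / (k - l) - term k l (C.erase (term k l C))) % (n / (k - l)) ≤ (k - 1) / (k - l) ∧
     (term k l (C.erase (term k l C)) +
       (term k l C + n / (k - l) - term k l (C.erase (term k l C))) % (n / (k - l))) % (n / (k - l))
       = term k l C) := by
  have hne : C.Nonempty := Finset.card_pos.1 (by omega)
  have hmem : ∀ {x : ℕ}, x ∈ C → x < n / (k - l) := fun hx => Finset.mem_range.1 (hC hx)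
  have hm : 0 < n / (k - l) := by have := hmem hne.choose_spec; omega
  by_cases hbig : (bigs k l C).Nonempty
  · -- CASE B : there is a big gap, terminal = w
    obtain ⟨w, hw⟩ := hbig
    have huniq : ∀ x ∈ bigs k l C, x = w := fun x hx =>
      bigs_subsingleton hlk hkn hC hconn x hx w hw
    have hf : term k l C = w := term_of_bigs hw huniq
    obtain ⟨hwC, ⟨y0, hy0C, hy0⟩, hbigw⟩ := mem_bigs.1 hw
    rw [hf]
    have hne' : (C.erase w).Nonempty := ⟨y0, Finset.mem_erase.2 ⟨by omega, hy0C⟩⟩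
    set B := C.filter (fun z => w < z) with hBdef
    have hBne : B.Nonempty := ⟨y0, Finset.mem_filter.2 ⟨hy0C, hy0⟩⟩
    have hBsub : B ⊆ C.erase w := by
      intro z hz
      obtain ⟨hz1, hz2⟩ := Finset.mem_filter.1 hz
      exact Finset.mem_erase.2 ⟨by omega, hz1⟩
    have hmaxCB : C.max' hne ∈ B := by
      refine Finset.mem_filter.2 ⟨C.max'_mem hne, ?_⟩
      have := Finset.le_max' C y0 hy0C
      omega
    have hmaxw : w < C.max' hne := (Finset.mem_filter.1 hmaxCB).2
    have hrootC : root k l C = B.min' hBne := by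
      have hfil : C.filter (fun y => term k l C < y) = B := by rw [hf]
      have hfne : (C.filter (fun y => term k l C < y)).Nonempty := by rw [hfil]; exact hBne
      rw [root_of_above hfne]
      congr 1
    set A := C.filter (fun z => z < w) with hAdef
    have hbigw' : ∀ z ∈ C, w < z → w + (k - 1) / (k - l) < z := by
      intro z hz hz2
      rcases hbigw z hz with h | h
      · omega
      · exact h
    by_cases hA : A.Nonempty
    · -- big gap with something below w
      set wA := A.max' hA with hwAdef
      have hwAA : wA ∈ A := A.max'_mem hA
      have hwAC : wA ∈ C := (Finset.mem_filter.1 hwAA).1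
      have hwAw : wA < w := (Finset.mem_filter.1 hwAA).2
      have hAsub : A ⊆ C.erase w := by
        intro z hz
        obtain ⟨hz1, hz2⟩ := Finset.mem_filter.1 hz
        exact Finset.mem_erase.2 ⟨by omega, hz1⟩
      have hgapA : w ≤ wA + (k - 1) / (k - l) := by
        have hnb : wA ∉ bigs k l C := fun h => by have := huniq _ h; omega
        obtain ⟨z, hzC, hz1, hz2⟩ := notbig hwAC ⟨w, hwC, hwAw⟩ hnb
        rcases lt_trichotomy z w with h | h | h
        · exact absurd (Finset.le_max' A z (Finset.mem_filter.2 ⟨hzC, h⟩)) (by omega)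
        · omega
        · have := hbigw' z hzC h
          omega
      have hwAbig : wA ∈ bigs k l (C.erase w) := by
        refine mem_bigs.2 ⟨Finset.mem_erase.2 ⟨by omega, hwAC⟩, ⟨y0,
          Finset.mem_erase.2 ⟨by omega, hy0C⟩, by omega⟩, ?_⟩
        intro z hz
        obtain ⟨hzw, hzC⟩ := Finset.mem_erase.1 hz
        rcases lt_trichotomy z w with h | h | h
        · left
          exact Finset.le_max' A z (Finset.mem_filter.2 ⟨hzC, h⟩)
        · omega
        · right
          have := hbigw' z hzC h
          omega
      have hbigsC' : ∀ x ∈ bigs k l (C.erase w), x = wA := by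
        intro x hx
        by_contra hxne
        obtain ⟨hxC', ⟨y, hyC', hy⟩, hbigx⟩ := mem_bigs.1 hx
        obtain ⟨hxw, hxC⟩ := Finset.mem_erase.1 hxC'
        have hynw := Finset.mem_erase.1 hyC'
        have hnb : x ∉ bigs k l C := fun h => by have := huniq _ h; omega
        obtain ⟨z, hzC, hz1, hz2⟩ := notbig hxC ⟨y, hynw.2, hy⟩ hnb
        rcases eq_or_ne z w with rfl | hzw
        · -- z = w ; then x < w so x ∈ A, x ≤ wA, x ≠ wA so x < wA < w = z
          have hxA : x ∈ A := Finset.mem_filter.2 ⟨hxC, by omega⟩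
          have hxwA : x < wA := by
            have := Finset.le_max' A x hxA
            omega
          rcases hbigx wA (Finset.mem_erase.2 ⟨by omega, hwAC⟩) with h | h
          · omega
          · omega
        · rcases hbigx z (Finset.mem_erase.2 ⟨hzw, hzC⟩) with h | h
          · omega
          · omega
      have ht' : term k l (C.erase w) = wA := term_of_bigs hwAbig hbigsC'
      have hroot' : root k l (C.erase w) = root k l C := by
        have hfil : (C.erase w).filter (fun y => term k l (C.erase w) < y) = B := by
          ext z
          rw [ht']
          simp only [Finset.mem_filter, Finset.mem_erase, hBdef]
          constructor
          · rintro ⟨⟨hzw, hzC⟩, hz⟩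
            refine ⟨hzC, ?_⟩
            rcases lt_trichotomy z w with h | h | h
            · exact absurd (Finset.le_max' A z (Finset.mem_filter.2 ⟨hzC, h⟩)) (by omega)
            · omega
            · exact h
          · rintro ⟨hzC, hz⟩
            exact ⟨⟨by omega, hzC⟩, by omega⟩
        have hfne : ((C.erase w).filter (fun y => term k l (C.erase w) < y)).Nonempty := by
          rw [hfil]; exact hBne
        rw [root_of_above hfne, hrootC]
        congr 1
      refine ⟨hwC, ?_, hroot', ?_⟩
      · -- connectivity of C.erase w
        have hconnB : Conn n k l B := by
          apply conn_of_chain hlk hkn hBne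
          intro x hx hxm
          have hxC := (Finset.mem_filter.1 hx).1
          have hxw := (Finset.mem_filter.1 hx).2
          have hnb : x ∉ bigs k l C := fun h => by have := huniq _ h; omega
          obtain ⟨z, hzC, hz1, hz2⟩ := notbig hxC
            ⟨B.max' hBne, (Finset.mem_filter.1 (B.max'_mem hBne)).1, by
              have := Finset.le_max' B x hx
              omega⟩ hnb
          exact ⟨z, Finset.mem_filter.2 ⟨hzC, by omega⟩, hz1, hz2⟩
        have hconnA : Conn n k l A := by
          apply conn_of_chain hlk hkn hA
          intro x hx hxm
          have hxC := (Finset.mem_filter.1 hx).1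
          have hxw := (Finset.mem_filter.1 hx).2
          have hxwA : x < wA := lt_of_le_of_ne (Finset.le_max' A x hx) hxm
          have hnb : x ∉ bigs k l C := fun h => by have := huniq _ h; omega
          obtain ⟨z, hzC, hz1, hz2⟩ := notbig hxC ⟨wA, hwAC, hxwA⟩ hnb
          rcases lt_trichotomy z w with h | h | h
          · exact ⟨z, Finset.mem_filter.2 ⟨hzC, h⟩, hz1, hz2⟩
          · exact ⟨wA, hwAA, hxwA, by omega⟩
          · have := hbigw' z hzC h
            omega
        have hadjmm := adj_min_max hlk hkn hC hconn hw hne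
        have hminA : C.min' hne ∈ A := by
          refine Finset.mem_filter.2 ⟨C.min'_mem hne, ?_⟩
          have := Finset.min'_le C wA hwAC
          omega
        have hreach : ∀ x ∈ C.erase w,
            Relation.ReflTransGen (Step n k l (C.erase w)) x (C.max' hne) := by
          intro x hx
          obtain ⟨hxw, hxC⟩ := Finset.mem_erase.1 hx
          rcases lt_trichotomy x w with h | h | h
          · -- x ∈ A : go to min, then jump to max
            have hxA : x ∈ A := Finset.mem_filter.2 ⟨hxC, h⟩
            have h1 : Relation.ReflTransGen (Step n k l (C.erase w)) x (C.min' hne) :=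
              Relation.ReflTransGen.mono (r := Step n k l A) (p := Step n k l (C.erase w))
                (fun u v ⟨hu, hv, hadj⟩ => ⟨hAsub hu, hAsub hv, hadj⟩) _ _
                (hconnA x hxA (C.min' hne) hminA)
            refine Relation.ReflTransGen.tail h1 ⟨hAsub hminA, hBsub hmaxCB, hadjmm⟩
          · omega
          · have hxB : x ∈ B := Finset.mem_filter.2 ⟨hxC, h⟩
            have hmax'B : B.max' hBne = C.max' hne := by
              apply le_antisymm
              · exact Finset.le_max' C _ ((Finset.mem_filter.1 (B.max'_mem hBne)).1)
              · exact Finset.le_max' B _ hmaxCB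
            have := hconnB x hxB (B.max' hBne) (B.max'_mem hBne)
            rw [hmax'B] at this
            exact Relation.ReflTransGen.mono (r := Step n k l B) (p := Step n k l (C.erase w))
              (fun u v ⟨hu, hv, hadj⟩ => ⟨hBsub hu, hBsub hv, hadj⟩) _ _ this
        intro x hx y hy
        exact Relation.ReflTransGen.trans (hreach x hx)
          ((fun hh => @Std.Symm.symm _ _ (@Relation.ReflTransGen.stdSymm _ _ ⟨fun _ _ h0 => Step_symm n k l h0⟩) _ _ hh) (hreach y hy))
      · -- the numeric facts
        rw [ht']
        have hwm := hmem hwC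
        have hval : w + n / (k - l) - wA = n / (k - l) + (w - wA) := by omega
        rw [hval, Nat.add_mod_left, Nat.mod_eq_of_lt (by omega)]
        refine ⟨by omega, by omega, ?_⟩
        have : wA + (w - wA) = w := by omega
        rw [this, Nat.mod_eq_of_lt hwm]
    · -- w is the minimum of C
      have hwmin : w = C.min' hne := by
        have h1 := Finset.min'_le C w hwC
        rcases eq_or_lt_of_le h1 with h | h
        · omega
        · exact absurd (Finset.mem_filter.2 ⟨C.min'_mem hne, h⟩ : C.min' hne ∈ A)
            (fun hh => hA ⟨_, hh⟩)
      have hCB : C.erase w = B := by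
        ext z
        simp only [Finset.mem_erase, hBdef, Finset.mem_filter]
        constructor
        · rintro ⟨hzw, hzC⟩
          refine ⟨hzC, ?_⟩
          have := Finset.min'_le C z hzC
          omega
        · rintro ⟨hzC, hz⟩
          exact ⟨by omega, hzC⟩
      have hbigsC' : bigs k l (C.erase w) = ∅ := by
        rw [Finset.eq_empty_iff_forall_notMem]
        intro x hx
        obtain ⟨hxC', ⟨y, hyC', hy⟩, hbigx⟩ := mem_bigs.1 hx
        obtain ⟨hxw, hxC⟩ := Finset.mem_erase.1 hxC'
        have hxgtw : w < x := by
          have := Finset.min'_le C x hxC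
          omega
        have hnb : x ∉ bigs k l C := fun h => by have := huniq _ h; omega
        obtain ⟨z, hzC, hz1, hz2⟩ := notbig hxC ⟨y, (Finset.mem_erase.1 hyC').2, hy⟩ hnb
        rcases hbigx z (Finset.mem_erase.2 ⟨by omega, hzC⟩) with h | h
        · omega
        · omega
      have ht' : term k l (C.erase w) = C.max' hne := by
        rw [term_of_bigs_empty hbigsC' hne']
        apply le_antisymm
        · exact Finset.le_max' C _ (Finset.mem_of_mem_erase ((C.erase w).max'_mem hne'))
        · exact Finset.le_max' _ _ (Finset.mem_erase.2 ⟨by omega, C.max'_mem hne⟩)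
      have hroot' : root k l (C.erase w) = root k l C := by
        have hfil : (C.erase w).filter (fun y => term k l (C.erase w) < y) = ∅ := by
          rw [Finset.eq_empty_iff_forall_notMem]
          intro z hz
          obtain ⟨hz1, hz2⟩ := Finset.mem_filter.1 hz
          rw [ht'] at hz2
          exact absurd (Finset.le_max' C z (Finset.mem_of_mem_erase hz1)) (by omega)
        rw [root_of_no_above (by simp [hfil]) hne', hrootC]
        apply le_antisymm
        · exact Finset.min'_le _ _ (by rw [hCB]; exact B.min'_mem hBne)
        · exact Finset.min'_le _ _ (by rw [← hCB]; exact (C.erase w).min'_mem hne')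
      refine ⟨hwC, ?_, hroot', ?_⟩
      · -- connectivity : chain in B
        rw [hCB]
        apply conn_of_chain hlk hkn hBne
        intro x hx hxm
        have hxC := (Finset.mem_filter.1 hx).1
        have hxw := (Finset.mem_filter.1 hx).2
        have hnb : x ∉ bigs k l C := fun h => by have := huniq _ h; omega
        obtain ⟨z, hzC, hz1, hz2⟩ := notbig hxC
          ⟨B.max' hBne, (Finset.mem_filter.1 (B.max'_mem hBne)).1, by
            have := Finset.le_max' B x hx
            omega⟩ hnb
        exact ⟨z, Finset.mem_filter.2 ⟨hzC, by omega⟩, hz1, hz2⟩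
      · rw [ht']
        have hwrap := wrap_le hlk hkn hC hconn hw hne
        rw [← hwmin] at hwrap
        have hmaxm := hmem (C.max'_mem hne)
        have hwm := hmem hwC
        have hval : w + n / (k - l) - C.max' hne = w + (n / (k - l) - C.max' hne) := by omega
        rw [hval, Nat.mod_eq_of_lt (by omega)]
        refine ⟨by omega, by omega, ?_⟩
        have : C.max' hne + (w + (n / (k - l) - C.max' hne)) = w + n / (k - l) := by omega
        rw [this, Nat.add_mod_right, Nat.mod_eq_of_lt hwm]
  · -- CASE N : no big gap, terminal = max
    rw [Finset.not_nonempty_iff_eq_empty] at hbig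
    have hf : term k l C = C.max' hne := term_of_bigs_empty hbig hne
    rw [hf]
    have hmaxC := C.max'_mem hne
    have hne' : (C.erase (C.max' hne)).Nonempty := by
      rw [← Finset.card_pos, Finset.card_erase_of_mem hmaxC]
      omega
    set M' := (C.erase (C.max' hne)).max' hne' with hM'def
    have hM'C' : M' ∈ C.erase (C.max' hne) := (C.erase (C.max' hne)).max'_mem hne'
    have hM'C : M' ∈ C := Finset.mem_of_mem_erase hM'C'
    have hM'lt : M' < C.max' hne := by
      have h1 := Finset.le_max' C M' hM'C
      have h2 := (Finset.mem_erase.1 hM'C').1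
      omega
    have hle_M' : ∀ z ∈ C, z ≠ C.max' hne → z ≤ M' := by
      intro z hz hzne
      exact Finset.le_max' _ z (Finset.mem_erase.2 ⟨hzne, hz⟩)
    have hgap : C.max' hne ≤ M' + (k - 1) / (k - l) := by
      have hnb : M' ∉ bigs k l C := by rw [hbig]; exact Finset.notMem_empty _
      obtain ⟨z, hzC, hz1, hz2⟩ := notbig hM'C ⟨C.max' hne, hmaxC, hM'lt⟩ hnb
      rcases eq_or_ne z (C.max' hne) with rfl | hzne
      · omega
      · exact absurd (hle_M' z hzC hzne) (by omega)
    have hbigsC' : bigs k l (C.erase (C.max' hne)) = ∅ := by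
      rw [Finset.eq_empty_iff_forall_notMem]
      intro x hx
      obtain ⟨hxC', ⟨y, hyC', hy⟩, hbigx⟩ := mem_bigs.1 hx
      obtain ⟨hxmax, hxC⟩ := Finset.mem_erase.1 hxC'
      have hnb : x ∉ bigs k l C := by rw [hbig]; exact Finset.notMem_empty _
      obtain ⟨z, hzC, hz1, hz2⟩ := notbig hxC ⟨y, (Finset.mem_erase.1 hyC').2, hy⟩ hnb
      rcases eq_or_ne z (C.max' hne) with rfl | hzne
      · have hyM' : y ≤ M' := Finset.le_max' _ y hyC'
        rcases hbigx M' hM'C' with h | h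
        · omega
        · omega
      · rcases hbigx z (Finset.mem_erase.2 ⟨hzne, hzC⟩) with h | h
        · omega
        · omega
    have ht' : term k l (C.erase (C.max' hne)) = M' := term_of_bigs_empty hbigsC' hne'
    have hroot' : root k l (C.erase (C.max' hne)) = root k l C := by
      have hfilC : C.filter (fun y => term k l C < y) = ∅ := by
        rw [Finset.eq_empty_iff_forall_notMem]
        intro z hz
        obtain ⟨hz1, hz2⟩ := Finset.mem_filter.1 hz
        rw [hf] at hz2
        exact absurd (Finset.le_max' C z hz1) (by omega)
      have hfilC' : (C.erase (C.max' hne)).filter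
          (fun y => term k l (C.erase (C.max' hne)) < y) = ∅ := by
        rw [Finset.eq_empty_iff_forall_notMem]
        intro z hz
        obtain ⟨hz1, hz2⟩ := Finset.mem_filter.1 hz
        rw [ht'] at hz2
        exact absurd (Finset.le_max' _ z hz1) (by omega)
      rw [root_of_no_above (by simp [hfilC']) hne', root_of_no_above (by simp [hfilC]) hne]
      have hminC : C.min' hne ∈ C.erase (C.max' hne) := by
        refine Finset.mem_erase.2 ⟨?_, C.min'_mem hne⟩
        have := Finset.min'_lt_max'_of_card C (by omega)
        omega
      apply le_antisymm
      · exact Finset.min'_le _ _ hminC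
      · exact Finset.le_min' _ _ _ (fun y hy => Finset.min'_le _ _ (Finset.mem_of_mem_erase hy))
    refine ⟨hmaxC, ?_, hroot', ?_⟩
    · apply conn_of_chain hlk hkn hne'
      intro x hx hxm
      obtain ⟨hxmax, hxC⟩ := Finset.mem_erase.1 hx
      have hxM' : x < M' := lt_of_le_of_ne (Finset.le_max' _ x hx) hxm
      have hnb : x ∉ bigs k l C := by rw [hbig]; exact Finset.notMem_empty _
      obtain ⟨z, hzC, hz1, hz2⟩ := notbig hxC ⟨M', hM'C, hxM'⟩ hnb
      rcases eq_or_ne z (C.max' hne) with rfl | hzne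
      · exact ⟨M', hM'C', hxM', by omega⟩
      · exact ⟨z, Finset.mem_erase.2 ⟨hzne, hzC⟩, hz1, hz2⟩
    · rw [ht']
      have hmaxm := hmem hmaxC
      have hval : C.max' hne + n / (k - l) - M' = n / (k - l) + (C.max' hne - M') := by omega
      rw [hval, Nat.add_mod_left, Nat.mod_eq_of_lt (by omega)]
      refine ⟨by omega, by omega, ?_⟩
      have : M' + (C.max' hne - M') = C.max' hne := by omega
      rw [this, Nat.mod_eq_of_lt hmaxm]


/-! ### global structures on an index set -/

variable (n k l)

noncomputable def icomp (Y : Finset ℕ) : ℕ := (Y.image (comp n k l Y)).card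

noncomputable def rootsSet (Y : Finset ℕ) : Finset ℕ :=
  Y.image (fun i => root k l (comp n k l Y i))

open scoped Classical in
noncomputable def rmaxOf (Y : Finset ℕ) : ℕ :=
  if h : Y.Nonempty then (rootsSet n k l Y).max'
    (h.image (fun i => root k l (comp n k l Y i))) else 0

noncomputable def fOf (Y : Finset ℕ) : ℕ := term k l (comp n k l Y (rmaxOf n k l Y))

noncomputable def gOf (Y : Finset ℕ) : ℕ :=
  (fOf n k l Y + n / (k - l) - term k l ((comp n k l Y (rmaxOf n k l Y)).erase (fOf n k l Y)))
    % (n / (k - l))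

variable {n k l}

lemma icomp_empty : icomp n k l ∅ = 0 := by simp [icomp]

lemma icomp_pos {Y : Finset ℕ} (hne : Y.Nonempty) : 1 ≤ icomp n k l Y := by
  rw [icomp]
  exact Finset.card_pos.2 (hne.image _)

lemma root_comp_mem {Y : Finset ℕ} {i : ℕ} (hi : i ∈ Y) :
    root k l (comp n k l Y i) ∈ comp n k l Y i := root_mem ⟨i, mem_comp_self hi⟩

lemma max'_congr {s t : Finset ℕ} (h : s = t) (hs : s.Nonempty) (ht : t.Nonempty) :
    s.max' hs = t.max' ht := by subst h; rfl

lemma rmax_spec {Y : Finset ℕ} (hne : Y.Nonempty) :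
    rmaxOf n k l Y ∈ Y ∧ root k l (comp n k l Y (rmaxOf n k l Y)) = rmaxOf n k l Y ∧
      ∀ i ∈ Y, root k l (comp n k l Y i) ≤ rmaxOf n k l Y := by
  have hR : (rootsSet n k l Y).Nonempty :=
    hne.image (fun i => root k l (comp n k l Y i))
  have hval : rmaxOf n k l Y = (rootsSet n k l Y).max' hR := by
    rw [rmaxOf, dif_pos hne]
  obtain ⟨i0, hi0, hroot⟩ := Finset.mem_image.1 ((rootsSet n k l Y).max'_mem hR)
  rw [← hval] at hroot
  have hrin : rmaxOf n k l Y ∈ comp n k l Y i0 := hroot ▸ root_comp_mem hi0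
  have hcompeq : comp n k l Y (rmaxOf n k l Y) = comp n k l Y i0 := comp_eq_of_mem hrin
  refine ⟨comp_subset hrin, by rw [hcompeq, hroot], ?_⟩
  intro i hi
  rw [hval]
  exact Finset.le_max' (rootsSet n k l Y) _ (Finset.mem_image.2 ⟨i, hi, rfl⟩)

lemma Cmax_nonempty {Y : Finset ℕ} (hne : Y.Nonempty) :
    (comp n k l Y (rmaxOf n k l Y)).Nonempty :=
  ⟨_, mem_comp_self (rmax_spec hne).1⟩

lemma fOf_mem {Y : Finset ℕ} (hne : Y.Nonempty) :
    fOf n k l Y ∈ comp n k l Y (rmaxOf n k l Y) ∧ fOf n k l Y ∈ Y := by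
  have h : term k l (comp n k l Y (rmaxOf n k l Y)) ∈ comp n k l Y (rmaxOf n k l Y) :=
    term_mem (Cmax_nonempty hne)
  exact ⟨h, comp_subset h⟩

lemma comp_out {Y : Finset ℕ} {z : ℕ} (hz : z ∈ Y) (hzC : z ∉ comp n k l Y (rmaxOf n k l Y)) :
    comp n k l (Y.erase (fOf n k l Y)) z = comp n k l Y z := by
  apply comp_erase_eq hz
  intro hf
  have h1 : comp n k l Y (fOf n k l Y) = comp n k l Y z := comp_eq_of_mem hf
  have hne : Y.Nonempty := ⟨z, hz⟩
  have h2 : comp n k l Y (fOf n k l Y) = comp n k l Y (rmaxOf n k l Y) :=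
    comp_eq_of_mem (fOf_mem hne).1
  apply hzC
  rw [← h2, h1]
  exact mem_comp_self hz

lemma case1_spec {Y : Finset ℕ} (hne : Y.Nonempty)
    (hcard : (comp n k l Y (rmaxOf n k l Y)).card = 1) :
    fOf n k l Y = rmaxOf n k l Y ∧
    icomp n k l (Y.erase (fOf n k l Y)) + 1 = icomp n k l Y ∧
    (∀ i ∈ Y.erase (fOf n k l Y),
      root k l (comp n k l (Y.erase (fOf n k l Y)) i) < rmaxOf n k l Y ∧
      root k l (comp n k l (Y.erase (fOf n k l Y)) i) ∈ Y) := by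
  obtain ⟨hrY, hrroot, hrmax⟩ := rmax_spec (n := n) (k := k) (l := l) hne
  set rmax := rmaxOf n k l Y with hrmaxdef
  set C := comp n k l Y rmax with hCdef
  have hCsing : C = {rmax} := by
    obtain ⟨a, ha⟩ := Finset.card_eq_one.1 hcard
    have hmm : rmax ∈ C := mem_comp_self hrY
    rw [ha] at hmm ⊢
    rw [Finset.mem_singleton.1 hmm]
  have hfr : fOf n k l Y = rmax := by
    rw [fOf, ← hCdef, hCsing, term_singleton]
  have hYC : ∀ z ∈ Y.erase (fOf n k l Y), z ∉ C := by
    intro z hz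
    rw [hCsing, Finset.mem_singleton]
    rw [← hfr]
    exact (Finset.mem_erase.1 hz).1
  have hcompsame : ∀ z ∈ Y.erase (fOf n k l Y),
      comp n k l (Y.erase (fOf n k l Y)) z = comp n k l Y z := by
    intro z hz
    exact comp_out (Finset.mem_of_mem_erase hz) (hYC z hz)
  refine ⟨hfr, ?_, ?_⟩
  · -- icomp drops by one
    have him' : (Y.erase (fOf n k l Y)).image (comp n k l (Y.erase (fOf n k l Y)))
        = (Y.erase (fOf n k l Y)).image (comp n k l Y) :=
      Finset.image_congr (fun z hz => hcompsame z hz)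
    have himY : Y.image (comp n k l Y)
        = insert C ((Y.erase (fOf n k l Y)).image (comp n k l Y)) := by
      ext D
      simp only [Finset.mem_image, Finset.mem_insert, Finset.mem_erase]
      constructor
      · rintro ⟨x, hx, rfl⟩
        by_cases hxC : x ∈ C
        · left
          rw [hCdef]
          exact comp_eq_of_mem hxC
        · right
          refine ⟨x, ⟨?_, hx⟩, rfl⟩
          intro hxf
          exact hxC (by rw [hxf, hfr, hCsing]; exact Finset.mem_singleton_self _)
      · rintro (rfl | ⟨x, ⟨hxf, hx⟩, rfl⟩)
        · exact ⟨rmax, hrY, rfl⟩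
        · exact ⟨x, hx, rfl⟩
    have hCnot : C ∉ (Y.erase (fOf n k l Y)).image (comp n k l Y) := by
      rintro h
      obtain ⟨x, hx, heq⟩ := Finset.mem_image.1 h
      have hxx : x ∈ comp n k l Y x := mem_comp_self (Finset.mem_of_mem_erase hx)
      rw [heq, hCsing, Finset.mem_singleton] at hxx
      exact (Finset.mem_erase.1 hx).1 (by rw [hxx, hfr])
    rw [icomp, icomp, him', himY, Finset.card_insert_of_notMem hCnot]
  · intro i hi
    have hcomp := hcompsame i hi
    have hiY := Finset.mem_of_mem_erase hi
    have hr := root_comp_mem (n := n) (k := k) (l := l) hiY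
    have hle := hrmax i hiY
    have hne2 : root k l (comp n k l Y i) ≠ rmax := by
      intro heq
      have : rmax ∈ comp n k l Y i := heq ▸ hr
      have h2 : comp n k l Y rmax = comp n k l Y i := comp_eq_of_mem this
      have : i ∈ C := by
        rw [hCdef, h2]
        exact mem_comp_self hiY
      exact hYC i hi this
    rw [hcomp]
    exact ⟨by omega, comp_subset hr⟩

lemma case2_spec (hlk : l < k) (hkn : k < n) {Y : Finset ℕ}
    (hY : Y ⊆ Finset.range (n / (k - l))) (hne : Y.Nonempty)
    (hcard : 2 ≤ (comp n k l Y (rmaxOf n k l Y)).card) :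
    icomp n k l (Y.erase (fOf n k l Y)) = icomp n k l Y ∧
    rootsSet n k l (Y.erase (fOf n k l Y)) = rootsSet n k l Y ∧
    (1 ≤ gOf n k l Y ∧ gOf n k l Y ≤ (k - 1) / (k - l) ∧
      (term k l (comp n k l (Y.erase (fOf n k l Y))
          (rmaxOf n k l (Y.erase (fOf n k l Y)))) + gOf n k l Y) % (n / (k - l))
        = fOf n k l Y) := by
  obtain ⟨hrY, hrroot, hrmax⟩ := rmax_spec (n := n) (k := k) (l := l) hne
  set rmax := rmaxOf n k l Y with hrmaxdef
  set C := comp n k l Y rmax with hCdef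
  have hCY : C ⊆ Y := comp_subset
  have hCrange : C ⊆ Finset.range (n / (k - l)) := fun x hx => hY (hCY hx)
  have hconnC : Conn n k l C := fun x hx y hy => comp_pairwise_conn hrY hx hy
  obtain ⟨hfC, hconnC', hrootC', hg1, hg2, hg3⟩ := erase_struct hlk hkn hCrange hconnC hcard
  have hfof : fOf n k l Y = term k l C := rfl
  have hgof : gOf n k l Y = (term k l C + n / (k - l)
      - term k l (C.erase (term k l C))) % (n / (k - l)) := rfl
  rw [hfof, hgof]
  set f := term k l C with hfdef
  set Y' := Y.erase f with hY'def
  set C' := C.erase f with hC'def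
  have hC'ne : C'.Nonempty := by
    rw [hC'def, ← Finset.card_pos, Finset.card_erase_of_mem hfC]
    omega
  have hrmaxC' : rmax ∈ C' := by
    have hroot' : root k l C' ∈ C' := root_mem hC'ne
    rw [hrootC', hrroot] at hroot'
    exact hroot'
  have hC'Y' : C' ⊆ Y' := fun z hz => by
    obtain ⟨h1, h2⟩ := Finset.mem_erase.1 hz
    exact Finset.mem_erase.2 ⟨h1, hCY h2⟩
  have hcompC' : ∀ x ∈ C', comp n k l Y' x = C' := by
    intro x hx
    apply Finset.Subset.antisymm
    · intro j hj
      obtain ⟨hjY', hrel⟩ := mem_comp.1 hj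
      have hjY := Finset.mem_of_mem_erase hjY'
      have hxC : x ∈ C := Finset.mem_of_mem_erase hx
      have : j ∈ comp n k l Y x := mem_comp.2 ⟨hjY, IRel_mono (Finset.erase_subset _ _) hrel⟩
      rw [comp_eq_of_mem hxC, ← hCdef] at this
      exact Finset.mem_erase.2 ⟨(Finset.mem_erase.1 hjY').1, this⟩
    · intro j hj
      refine mem_comp.2 ⟨hC'Y' hj, ?_⟩
      exact Relation.ReflTransGen.mono (r := Step n k l C') (p := Step n k l Y')
        (fun u v ⟨hu, hv, hadj⟩ => ⟨hC'Y' hu, hC'Y' hv, hadj⟩) _ _ (hconnC' x hx j hj)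
  have hcompout : ∀ z ∈ Y, z ∉ C → comp n k l Y' z = comp n k l Y z := by
    intro z hz hzC
    exact comp_out hz hzC
  -- the two images
  have himY : Y.image (comp n k l Y) = insert C ((Y \ C).image (comp n k l Y)) := by
    ext D
    simp only [Finset.mem_image, Finset.mem_insert, Finset.mem_sdiff]
    constructor
    · rintro ⟨x, hx, rfl⟩
      by_cases hxC : x ∈ C
      · left
        rw [hCdef]
        exact comp_eq_of_mem hxC
      · right
        exact ⟨x, ⟨hx, hxC⟩, rfl⟩
    · rintro (rfl | ⟨x, ⟨hx, -⟩, rfl⟩)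
      · exact ⟨rmax, hrY, rfl⟩
      · exact ⟨x, hx, rfl⟩
  have himY' : Y'.image (comp n k l Y') = insert C' ((Y \ C).image (comp n k l Y)) := by
    ext D
    simp only [Finset.mem_image, Finset.mem_insert, Finset.mem_sdiff]
    constructor
    · rintro ⟨x, hx, rfl⟩
      have hxY := Finset.mem_of_mem_erase hx
      by_cases hxC : x ∈ C
      · left
        exact hcompC' x (Finset.mem_erase.2 ⟨(Finset.mem_erase.1 hx).1, hxC⟩)
      · right
        exact ⟨x, ⟨hxY, hxC⟩, (hcompout x hxY hxC).symm⟩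
    · rintro (rfl | ⟨x, ⟨hx, hxC⟩, rfl⟩)
      · exact ⟨rmax, hC'Y' hrmaxC', hcompC' rmax hrmaxC'⟩
      · have hxY' : x ∈ Y' := Finset.mem_erase.2 ⟨fun h => hxC (h ▸ hfC), hx⟩
        exact ⟨x, hxY', hcompout x hx hxC⟩
  have hCnot : C ∉ (Y \ C).image (comp n k l Y) := by
    rintro h
    obtain ⟨x, hx, heq⟩ := Finset.mem_image.1 h
    obtain ⟨hxY, hxC⟩ := Finset.mem_sdiff.1 hx
    exact hxC (heq ▸ mem_comp_self hxY)
  have hC'not : C' ∉ (Y \ C).image (comp n k l Y) := by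
    rintro h
    obtain ⟨x, hx, heq⟩ := Finset.mem_image.1 h
    obtain ⟨hxY, hxC⟩ := Finset.mem_sdiff.1 hx
    have := heq ▸ mem_comp_self hxY
    exact hxC (Finset.mem_of_mem_erase this)
  constructor
  · rw [icomp, icomp, himY', himY, Finset.card_insert_of_notMem hCnot,
      Finset.card_insert_of_notMem hC'not]
  have hroots : rootsSet n k l Y' = rootsSet n k l Y := by
    ext r
    simp only [rootsSet, Finset.mem_image]
    constructor
    · rintro ⟨x, hx, rfl⟩
      have hxY := Finset.mem_of_mem_erase hx
      by_cases hxC : x ∈ C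
      · have hxC' : x ∈ C' := Finset.mem_erase.2 ⟨(Finset.mem_erase.1 hx).1, hxC⟩
        rw [hcompC' x hxC', hrootC']
        exact ⟨rmax, hrY, by rw [← hCdef]⟩
      · rw [hcompout x hxY hxC]
        exact ⟨x, hxY, rfl⟩
    · rintro ⟨x, hx, rfl⟩
      by_cases hxC : x ∈ C
      · refine ⟨rmax, hC'Y' hrmaxC', ?_⟩
        have h1 : comp n k l Y x = C := comp_eq_of_mem hxC
        rw [hcompC' rmax hrmaxC', hrootC', h1]
      · have hxY' : x ∈ Y' := Finset.mem_erase.2 ⟨fun h => hxC (h ▸ hfC), hx⟩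
        exact ⟨x, hxY', by rw [hcompout x hx hxC]⟩
  refine ⟨hroots, ?_⟩
  have hY'ne : Y'.Nonempty := ⟨rmax, hC'Y' hrmaxC'⟩
  have hrmax' : rmaxOf n k l Y' = rmax := by
    rw [rmaxOf, dif_pos hY'ne, hrmaxdef, rmaxOf, dif_pos hne]
    exact max'_congr (by rw [hroots]) _ _
  have hCmax' : comp n k l Y' (rmaxOf n k l Y') = C' := by
    rw [hrmax']
    exact hcompC' rmax hrmaxC'
  rw [hCmax']
  exact ⟨hg1, hg2, hg3⟩


/-! ### counting -/

variable (n k l)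

noncomputable def posT (T : Finset ℕ) (x : ℕ) : ℕ :=
  (T.filter (fun z => z < x)).card

open scoped Classical in
noncomputable def tagOf (T : Finset ℕ) (Y : Finset ℕ) : ℕ :=
  if (comp n k l Y (rmaxOf n k l Y)).card = 1
  then (k - 1) / (k - l) + posT T (fOf n k l Y)
  else gOf n k l Y - 1

open scoped Classical in
noncomputable def Fam (T : Finset ℕ) (t c j : ℕ) : Finset (Finset ℕ) :=
  T.powerset.filter (fun Y => Y.card = t ∧ icomp n k l Y = c ∧
    ∀ i ∈ Y, posT T (root k l (comp n k l Y i)) < j)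

variable {n k l}

lemma posT_lt_of_mem {T : Finset ℕ} {x : ℕ} (hx : x ∈ T) : posT T x < T.card := by
  apply Finset.card_lt_card
  rw [Finset.ssubset_iff_of_subset (Finset.filter_subset _ _)]
  exact ⟨x, hx, by simp⟩

lemma posT_strictmono {T : Finset ℕ} {x y : ℕ} (hx : x ∈ T) (hxy : x < y) :
    posT T x < posT T y := by
  apply Finset.card_lt_card
  rw [Finset.ssubset_iff_of_subset]
  · exact ⟨x, Finset.mem_filter.2 ⟨hx, hxy⟩, by simp⟩
  · intro z hz
    obtain ⟨h1, h2⟩ := Finset.mem_filter.1 hz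
    exact Finset.mem_filter.2 ⟨h1, by omega⟩

lemma posT_inj {T : Finset ℕ} {x y : ℕ} (hx : x ∈ T) (hy : y ∈ T)
    (h : posT T x = posT T y) : x = y := by
  rcases lt_trichotomy x y with hc | hc | hc
  · have := posT_strictmono hx hc; omega
  · exact hc
  · have := posT_strictmono hy hc; omega

lemma hockey (c : ℕ) : ∀ j, ∑ p ∈ Finset.range j, Nat.choose p c = Nat.choose j (c + 1) := by
  intro j
  induction j with
  | zero => simp
  | succ j ih =>
    rw [Finset.sum_range_succ, ih, Nat.choose_succ_succ' j c]
    omega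

lemma mem_Fam {T : Finset ℕ} {t c j : ℕ} {Y : Finset ℕ} :
    Y ∈ Fam n k l T t c j ↔ Y ⊆ T ∧ Y.card = t ∧ icomp n k l Y = c ∧
      ∀ i ∈ Y, posT T (root k l (comp n k l Y i)) < j := by
  rw [Fam]
  classical
  simp only [Finset.mem_filter, Finset.mem_powerset]

lemma main_count (hlk : l < k) (hkn : k < n) {T : Finset ℕ}
    (hT : T ⊆ Finset.range (n / (k - l))) :
    ∀ t c j, (Fam n k l T t c j).card
      ≤ Nat.choose j c * ((k - 1) / (k - l) + 1) ^ t := by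
  intro t
  induction t with
  | zero =>
    intro c j
    rcases Nat.eq_zero_or_pos c with rfl | hc
    · have hsub : Fam n k l T 0 0 j ⊆ {∅} := by
        intro Y hY
        obtain ⟨-, hcard, -, -⟩ := mem_Fam.1 hY
        rw [Finset.mem_singleton]
        exact Finset.card_eq_zero.1 hcard
      calc (Fam n k l T 0 0 j).card ≤ ({∅} : Finset (Finset ℕ)).card :=
            Finset.card_le_card hsub
      _ = 1 := Finset.card_singleton _
      _ ≤ _ := by simp
    · have hemp : Fam n k l T 0 c j = ∅ := by
        rw [Finset.eq_empty_iff_forall_notMem]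
        intro Y hY
        obtain ⟨-, hcard, hic, -⟩ := mem_Fam.1 hY
        rw [Finset.card_eq_zero.1 hcard, icomp_empty] at hic
        omega
      rw [hemp]
      simp
  | succ t ih =>
    intro c j
    rcases Nat.eq_zero_or_pos c with rfl | hcpos
    · have hemp : Fam n k l T (t + 1) 0 j = ∅ := by
        rw [Finset.eq_empty_iff_forall_notMem]
        intro Y hY
        obtain ⟨-, hcard, hic, -⟩ := mem_Fam.1 hY
        have : Y.Nonempty := Finset.card_pos.1 (by omega)
        have := icomp_pos (n := n) (k := k) (l := l) this
        omega
      rw [hemp]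
      simp
    obtain ⟨c0, rfl⟩ : ∃ c0, c = c0 + 1 := ⟨c - 1, by omega⟩
    classical
    set rr := (k - 1) / (k - l) with hrr
    -- facts about members
    have hmemfacts : ∀ Y ∈ Fam n k l T (t + 1) (c0 + 1) j,
        Y.Nonempty ∧ Y ⊆ Finset.range (n / (k - l)) := by
      intro Y hY
      obtain ⟨hYT, hcard, -, -⟩ := mem_Fam.1 hY
      exact ⟨Finset.card_pos.1 (by omega), fun x hx => hT (hYT hx)⟩
    -- cover by tags
    have hcover : (Fam n k l T (t + 1) (c0 + 1) j).card ≤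
        ∑ v ∈ Finset.range (rr + j),
          ((Fam n k l T (t + 1) (c0 + 1) j).filter (fun Y => tagOf n k l T Y = v)).card := by
      have : Fam n k l T (t + 1) (c0 + 1) j = (Finset.range (rr + j)).biUnion
          (fun v => (Fam n k l T (t + 1) (c0 + 1) j).filter (fun Y => tagOf n k l T Y = v)) := by
        ext Y
        simp only [Finset.mem_biUnion, Finset.mem_filter, Finset.mem_range]
        constructor
        · intro hY
          refine ⟨tagOf n k l T Y, ?_, hY, rfl⟩
          obtain ⟨hne, hYrange⟩ := hmemfacts Y hY
          obtain ⟨hYT, hcard, hic, hroots⟩ := mem_Fam.1 hY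
          by_cases hc1 : (comp n k l Y (rmaxOf n k l Y)).card = 1
          · rw [tagOf, if_pos hc1]
            obtain ⟨hfr, -, -⟩ := case1_spec hne hc1
            have h1 := hroots (rmaxOf n k l Y) (rmax_spec hne).1
            rw [(rmax_spec hne).2.1] at h1
            rw [hfr]
            omega
          · rw [tagOf, if_neg hc1]
            have hc2 : 2 ≤ (comp n k l Y (rmaxOf n k l Y)).card := by
              have := Finset.card_pos.2 (Cmax_nonempty (n := n) (k := k) (l := l) hne)
              omega
            obtain ⟨-, -, hg1, hg2, -⟩ := case2_spec hlk hkn hYrange hne hc2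
            omega
        · rintro ⟨v, -, hY, -⟩
          exact hY
      conv_lhs => rw [this]
      apply Finset.card_biUnion_le
    -- bound each piece
    have hpiece : ∀ v ∈ Finset.range (rr + j),
        ((Fam n k l T (t + 1) (c0 + 1) j).filter (fun Y => tagOf n k l T Y = v)).card ≤
          (if v < rr then Nat.choose j (c0 + 1) * (rr + 1) ^ t
           else Nat.choose (v - rr) c0 * (rr + 1) ^ t) := by
      intro v hv
      by_cases hvrr : v < rr
      · rw [if_pos hvrr]
        calc ((Fam n k l T (t + 1) (c0 + 1) j).filter (fun Y => tagOf n k l T Y = v)).card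
            ≤ (Fam n k l T t (c0 + 1) j).card := by
              apply Finset.card_le_card_of_injOn (fun Y => Y.erase (fOf n k l Y))
              · -- maps to
                intro Y hY
                obtain ⟨hYmem, htag⟩ := Finset.mem_filter.1 hY
                obtain ⟨hne, hYrange⟩ := hmemfacts Y hYmem
                obtain ⟨hYT, hcard, hic, hroots⟩ := mem_Fam.1 hYmem
                have hc1 : ¬ (comp n k l Y (rmaxOf n k l Y)).card = 1 := by
                  intro hc1
                  rw [tagOf, if_pos hc1] at htag
                  omega
                have hc2 : 2 ≤ (comp n k l Y (rmaxOf n k l Y)).card := by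
                  have := Finset.card_pos.2 (Cmax_nonempty (n := n) (k := k) (l := l) hne)
                  omega
                obtain ⟨hicomp', hroots', -⟩ := case2_spec hlk hkn hYrange hne hc2
                refine mem_Fam.2 ⟨fun x hx => hYT (Finset.mem_of_mem_erase hx), ?_, ?_, ?_⟩
                · rw [Finset.card_erase_of_mem (fOf_mem hne).2, hcard]
                  omega
                · rw [hicomp', hic]
                · intro i hi
                  have hmem : root k l (comp n k l (Y.erase (fOf n k l Y)) i)
                      ∈ rootsSet n k l (Y.erase (fOf n k l Y)) :=
                    Finset.mem_image.2 ⟨i, hi, rfl⟩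
                  rw [hroots'] at hmem
                  obtain ⟨i0, hi0, heq⟩ := Finset.mem_image.1 hmem
                  rw [← heq]
                  exact hroots i0 hi0
              · -- injective
                intro Y1 hY1 Y2 hY2 herase
                obtain ⟨hY1mem, htag1⟩ := Finset.mem_filter.1 hY1
                obtain ⟨hY2mem, htag2⟩ := Finset.mem_filter.1 hY2
                obtain ⟨hne1, hYrange1⟩ := hmemfacts Y1 hY1mem
                obtain ⟨hne2, hYrange2⟩ := hmemfacts Y2 hY2mem
                have hc11 : ¬ (comp n k l Y1 (rmaxOf n k l Y1)).card = 1 := by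
                  intro hc1
                  rw [tagOf, if_pos hc1] at htag1
                  omega
                have hc21 : 2 ≤ (comp n k l Y1 (rmaxOf n k l Y1)).card := by
                  have := Finset.card_pos.2 (Cmax_nonempty (n := n) (k := k) (l := l) hne1)
                  omega
                have hc12 : ¬ (comp n k l Y2 (rmaxOf n k l Y2)).card = 1 := by
                  intro hc1
                  rw [tagOf, if_pos hc1] at htag2
                  omega
                have hc22 : 2 ≤ (comp n k l Y2 (rmaxOf n k l Y2)).card := by
                  have := Finset.card_pos.2 (Cmax_nonempty (n := n) (k := k) (l := l) hne2)
                  omega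
                have herase' : Y1.erase (fOf n k l Y1) = Y2.erase (fOf n k l Y2) := herase
                obtain ⟨-, -, hg11, hg12, hg13⟩ := case2_spec hlk hkn hYrange1 hne1 hc21
                obtain ⟨-, -, hg21, hg22, hg23⟩ := case2_spec hlk hkn hYrange2 hne2 hc22
                rw [tagOf, if_neg hc11] at htag1
                rw [tagOf, if_neg hc12] at htag2
                have hgeq : gOf n k l Y1 = gOf n k l Y2 := by omega
                have hfeq : fOf n k l Y1 = fOf n k l Y2 := by
                  rw [← hg13, ← hg23, herase', hgeq]
                calc Y1 = insert (fOf n k l Y1) (Y1.erase (fOf n k l Y1)) :=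
                      (Finset.insert_erase (fOf_mem hne1).2).symm
                _ = insert (fOf n k l Y2) (Y2.erase (fOf n k l Y2)) := by rw [herase', hfeq]
                _ = Y2 := Finset.insert_erase (fOf_mem hne2).2
        _ ≤ Nat.choose j (c0 + 1) * (rr + 1) ^ t := ih (c0 + 1) j
      · rw [if_neg hvrr]
        calc ((Fam n k l T (t + 1) (c0 + 1) j).filter (fun Y => tagOf n k l T Y = v)).card
            ≤ (Fam n k l T t c0 (v - rr)).card := by
              apply Finset.card_le_card_of_injOn (fun Y => Y.erase (fOf n k l Y))
              · intro Y hY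
                obtain ⟨hYmem, htag⟩ := Finset.mem_filter.1 hY
                obtain ⟨hne, hYrange⟩ := hmemfacts Y hYmem
                obtain ⟨hYT, hcard, hic, hroots⟩ := mem_Fam.1 hYmem
                have hc1 : (comp n k l Y (rmaxOf n k l Y)).card = 1 := by
                  by_contra hc1
                  have hc2 : 2 ≤ (comp n k l Y (rmaxOf n k l Y)).card := by
                    have := Finset.card_pos.2 (Cmax_nonempty (n := n) (k := k) (l := l) hne)
                    omega
                  obtain ⟨-, -, hg1, hg2, -⟩ := case2_spec hlk hkn hYrange hne hc2
                  rw [tagOf, if_neg hc1] at htag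
                  omega
                rw [tagOf, if_pos hc1] at htag
                obtain ⟨hfr, hicomp', hroots'⟩ := case1_spec hne hc1
                refine mem_Fam.2 ⟨fun x hx => hYT (Finset.mem_of_mem_erase hx), ?_, ?_, ?_⟩
                · rw [Finset.card_erase_of_mem (fOf_mem hne).2, hcard]
                  omega
                · beta_reduce; omega
                · intro i hi
                  obtain ⟨hlt, hmemY⟩ := hroots' i hi
                  have hrT : root k l (comp n k l (Y.erase (fOf n k l Y)) i) ∈ T :=
                    hYT hmemY
                  have hfT : rmaxOf n k l Y ∈ T := hYT (rmax_spec hne).1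
                  have := posT_strictmono hrT hlt
                  rw [← hfr] at this
                  beta_reduce; omega
              · intro Y1 hY1 Y2 hY2 herase
                obtain ⟨hY1mem, htag1⟩ := Finset.mem_filter.1 hY1
                obtain ⟨hY2mem, htag2⟩ := Finset.mem_filter.1 hY2
                obtain ⟨hne1, hYrange1⟩ := hmemfacts Y1 hY1mem
                obtain ⟨hne2, hYrange2⟩ := hmemfacts Y2 hY2mem
                obtain ⟨hY1T, -, -, -⟩ := mem_Fam.1 hY1mem
                obtain ⟨hY2T, -, -, -⟩ := mem_Fam.1 hY2mem
                have hc11 : (comp n k l Y1 (rmaxOf n k l Y1)).card = 1 := by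
                  by_contra hc1
                  have hc2 : 2 ≤ (comp n k l Y1 (rmaxOf n k l Y1)).card := by
                    have := Finset.card_pos.2 (Cmax_nonempty (n := n) (k := k) (l := l) hne1)
                    omega
                  obtain ⟨-, -, hg1, hg2, -⟩ := case2_spec hlk hkn hYrange1 hne1 hc2
                  rw [tagOf, if_neg hc1] at htag1
                  omega
                have hc12 : (comp n k l Y2 (rmaxOf n k l Y2)).card = 1 := by
                  by_contra hc1
                  have hc2 : 2 ≤ (comp n k l Y2 (rmaxOf n k l Y2)).card := by
                    have := Finset.card_pos.2 (Cmax_nonempty (n := n) (k := k) (l := l) hne2)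
                    omega
                  obtain ⟨-, -, hg1, hg2, -⟩ := case2_spec hlk hkn hYrange2 hne2 hc2
                  rw [tagOf, if_neg hc1] at htag2
                  omega
                rw [tagOf, if_pos hc11] at htag1
                rw [tagOf, if_pos hc12] at htag2
                have herase' : Y1.erase (fOf n k l Y1) = Y2.erase (fOf n k l Y2) := herase
                have hfeq : fOf n k l Y1 = fOf n k l Y2 := by
                  apply posT_inj (hY1T (fOf_mem hne1).2) (hY2T (fOf_mem hne2).2)
                  omega
                calc Y1 = insert (fOf n k l Y1) (Y1.erase (fOf n k l Y1)) :=
                      (Finset.insert_erase (fOf_mem hne1).2).symm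
                _ = insert (fOf n k l Y2) (Y2.erase (fOf n k l Y2)) := by rw [herase', hfeq]
                _ = Y2 := Finset.insert_erase (fOf_mem hne2).2
        _ ≤ Nat.choose (v - rr) c0 * (rr + 1) ^ t := ih c0 (v - rr)
    -- sum it up
    calc (Fam n k l T (t + 1) (c0 + 1) j).card
        ≤ ∑ v ∈ Finset.range (rr + j),
          ((Fam n k l T (t + 1) (c0 + 1) j).filter (fun Y => tagOf n k l T Y = v)).card :=
          hcover
    _ ≤ ∑ v ∈ Finset.range (rr + j),
          (if v < rr then Nat.choose j (c0 + 1) * (rr + 1) ^ t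
           else Nat.choose (v - rr) c0 * (rr + 1) ^ t) :=
          Finset.sum_le_sum hpiece
    _ = Nat.choose j (c0 + 1) * (rr + 1) ^ (t + 1) := by
          rw [Finset.range_eq_Ico, ← Finset.sum_Ico_consecutive _ (Nat.zero_le rr)
            (Nat.le_add_right rr j)]
          have h1 : ∑ v ∈ Finset.Ico 0 rr,
              (if v < rr then Nat.choose j (c0 + 1) * (rr + 1) ^ t
               else Nat.choose (v - rr) c0 * (rr + 1) ^ t)
              = rr * (Nat.choose j (c0 + 1) * (rr + 1) ^ t) := by
            rw [Finset.sum_congr rfl (fun v hv => if_pos (Finset.mem_Ico.1 hv).2)]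
            simp [Finset.sum_const, Nat.card_Ico]
          have h2 : ∑ v ∈ Finset.Ico rr (rr + j),
              (if v < rr then Nat.choose j (c0 + 1) * (rr + 1) ^ t
               else Nat.choose (v - rr) c0 * (rr + 1) ^ t)
              = Nat.choose j (c0 + 1) * (rr + 1) ^ t := by
            rw [Finset.sum_congr rfl (fun v hv => if_neg (by
              have := (Finset.mem_Ico.1 hv).1; omega))]
            rw [Finset.sum_Ico_eq_sum_range]
            simp only [Nat.add_sub_cancel_left, Nat.add_sub_cancel]
            rw [← Finset.sum_mul, hockey]
          rw [h1, h2]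
          ring
  

/-! ### bridge to compCount -/

lemma card_image_eq_of_iff {α β γ : Type*} [DecidableEq α] [DecidableEq β] [DecidableEq γ]
    {s : Finset α} {f : α → β} {g : α → γ}
    (h : ∀ x ∈ s, ∀ y ∈ s, (f x = f y ↔ g x = g y)) :
    (s.image f).card = (s.image g).card := by
  induction s using Finset.induction with
  | empty => simp
  | @insert a s ha ih =>
    rw [Finset.image_insert, Finset.image_insert]
    have hmemiff : f a ∈ s.image f ↔ g a ∈ s.image g := by
      simp only [Finset.mem_image]
      constructor
      · rintro ⟨x, hx, hfx⟩
        exact ⟨x, hx, (h x (Finset.mem_insert_of_mem hx) a (Finset.mem_insert_self a s)).1 hfx⟩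
      · rintro ⟨x, hx, hgx⟩
        exact ⟨x, hx, (h x (Finset.mem_insert_of_mem hx) a (Finset.mem_insert_self a s)).2 hgx⟩
    have ih' := ih (fun x hx y hy =>
      h x (Finset.mem_insert_of_mem hx) y (Finset.mem_insert_of_mem hy))
    by_cases hfa : f a ∈ s.image f
    · rw [Finset.insert_eq_self.2 hfa, Finset.insert_eq_self.2 (hmemiff.1 hfa), ih']
    · rw [Finset.card_insert_of_notMem hfa,
        Finset.card_insert_of_notMem (fun hh => hfa (hmemiff.2 hh)), ih']

variable (n k l)

def XF (F : Finset (Finset (ZMod n))) : Finset ℕ :=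
  (Finset.range (n / (k - l))).filter (fun i => E n k l i ∈ F)

variable {n k l}

lemma cycleHG_eq : cycleHG n k l = (Finset.range (n / (k - l))).image (E n k l) := rfl

lemma XF_image (hlk : l < k) {F : Finset (Finset (ZMod n))} (hF : F ⊆ cycleHG n k l) :
    (XF n k l F).image (E n k l) = F := by
  ext e
  simp only [Finset.mem_image, XF, Finset.mem_filter, Finset.mem_range]
  constructor
  · rintro ⟨i, ⟨-, hi⟩, rfl⟩
    exact hi
  · intro he
    obtain ⟨i, hi, rfl⟩ := Finset.mem_image.1 (by rw [cycleHG_eq] at hF; exact hF he)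
    exact ⟨i, ⟨Finset.mem_range.1 hi, he⟩, rfl⟩

lemma XF_card (hlk : l < k) (hkn : k < n) {F : Finset (Finset (ZMod n))}
    (hF : F ⊆ cycleHG n k l) : (XF n k l F).card = F.card := by
  have himg := XF_image hlk hF
  have hinj : Set.InjOn (E n k l) ↑(XF n k l F) := by
    intro i hi j hj heq
    simp only [Finset.coe_filter, Set.mem_setOf_eq, XF, Finset.mem_range] at hi hj
    exact E_inj hlk hkn hi.1 hj.1 heq
  calc (XF n k l F).card = ((XF n k l F).image (E n k l)).card :=
        (Finset.card_image_of_injOn hinj).symm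
  _ = F.card := by rw [himg]

lemma XF_range {F : Finset (Finset (ZMod n))} : XF n k l F ⊆ Finset.range (n / (k - l)) :=
  Finset.filter_subset _ _

lemma mem_XF {F : Finset (Finset (ZMod n))} {i : ℕ} :
    i ∈ XF n k l F ↔ i < n / (k - l) ∧ E n k l i ∈ F := by
  simp [XF]

lemma EdgeConn_symm {V : Type*} [DecidableEq V] {F : Finset (Finset V)} {u v : V}
    (h : EdgeConn F u v) : EdgeConn F v u := by
  refine @Std.Symm.symm _ _ (@Relation.ReflTransGen.stdSymm _ _ ⟨?_⟩) _ _ h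
  rintro a b ⟨e, he, ha, hb⟩
  exact ⟨e, he, hb, ha⟩

lemma IRel_to_EdgeConn (hlk : l < k) {F : Finset (Finset (ZMod n))} {i j : ℕ}
    (h : IRel n k l (XF n k l F) i j) :
    EdgeConn F ((((k - l) * i : ℕ) : ZMod n)) ((((k - l) * j : ℕ) : ZMod n)) := by
  induction h with
  | refl => exact Relation.ReflTransGen.refl
  | @tail b c hab hbc ih =>
    obtain ⟨hbX, hcX, x, hx⟩ := hbc
    rw [Finset.mem_inter] at hx
    refine Relation.ReflTransGen.trans ih (Relation.ReflTransGen.trans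
      (Relation.ReflTransGen.single ⟨E n k l b, (mem_XF.1 hbX).2, start_mem_E hlk, hx.1⟩)
      (Relation.ReflTransGen.single ⟨E n k l c, (mem_XF.1 hcX).2, hx.2, start_mem_E hlk⟩))

lemma EdgeConn_to_IRel {F : Finset (Finset (ZMod n))} (hF : F ⊆ cycleHG n k l)
    {u v : ZMod n} (h : EdgeConn F u v) :
    ∀ i j, i ∈ XF n k l F → j ∈ XF n k l F → u ∈ E n k l i → v ∈ E n k l j →
      IRel n k l (XF n k l F) i j := by
  induction h with
  | refl =>
    intro i j hi hj hu hv
    exact Relation.ReflTransGen.single ⟨hi, hj, u, Finset.mem_inter.2 ⟨hu, hv⟩⟩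
  | @tail b c hab hbc ih =>
    intro i j hi hj hu hv
    obtain ⟨e, he, hbe, hce⟩ := hbc
    obtain ⟨a, ha, rfl⟩ := Finset.mem_image.1 (by rw [cycleHG_eq] at hF; exact hF he)
    have haX : a ∈ XF n k l F := mem_XF.2 ⟨Finset.mem_range.1 ha, he⟩
    refine Relation.ReflTransGen.tail (ih i a hi haX hu hbe) ?_
    exact ⟨haX, hj, c, Finset.mem_inter.2 ⟨hce, hv⟩⟩

open scoped Classical in
lemma compCount_eq_icomp (hlk : l < k) (hkn : k < n) {F : Finset (Finset (ZMod n))}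
    (hF : F ⊆ cycleHG n k l) : compCount F = icomp n k l (XF n k l F) := by
  classical
  set V := F.biUnion id with hV
  have hclass : ∀ {u v : ZMod n}, EdgeConn F u v →
      V.filter (fun w => EdgeConn F u w) = V.filter (fun w => EdgeConn F v w) := by
    intro u v huv
    ext w
    simp only [Finset.mem_filter]
    constructor
    · rintro ⟨hw, h2⟩
      exact ⟨hw, Relation.ReflTransGen.trans (EdgeConn_symm huv) h2⟩
    · rintro ⟨hw, h2⟩
      exact ⟨hw, Relation.ReflTransGen.trans huv h2⟩
  have hVE : ∀ u ∈ V, ∃ i ∈ XF n k l F, u ∈ E n k l i := by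
    intro u hu
    obtain ⟨e, he, hue⟩ := Finset.mem_biUnion.1 hu
    obtain ⟨a, ha, rfl⟩ := Finset.mem_image.1 (by rw [cycleHG_eq] at hF; exact hF he)
    exact ⟨a, mem_XF.2 ⟨Finset.mem_range.1 ha, he⟩, hue⟩
  have hEV : ∀ i ∈ XF n k l F, (((k - l) * i : ℕ) : ZMod n) ∈ V := by
    intro i hi
    exact Finset.mem_biUnion.2 ⟨E n k l i, (mem_XF.1 hi).2, start_mem_E hlk⟩
  have himeq : V.image (fun u => V.filter (fun w => EdgeConn F u w))
      = (XF n k l F).image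
          (fun i => V.filter (fun w => EdgeConn F ((((k - l) * i : ℕ) : ZMod n)) w)) := by
    ext D
    simp only [Finset.mem_image]
    constructor
    · rintro ⟨u, hu, rfl⟩
      obtain ⟨i, hi, huE⟩ := hVE u hu
      refine ⟨i, hi, ?_⟩
      apply (hclass _).symm
      exact Relation.ReflTransGen.single ⟨E n k l i, (mem_XF.1 hi).2, huE, start_mem_E hlk⟩
    · rintro ⟨i, hi, rfl⟩
      exact ⟨_, hEV i hi, rfl⟩
  have hcc : compCount F
      = ((XF n k l F).image
          (fun i => V.filter (fun w => EdgeConn F ((((k - l) * i : ℕ) : ZMod n)) w))).card := by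
    rw [compCount]
    rw [← himeq]
  rw [hcc, icomp]
  apply card_image_eq_of_iff
  intro i hi j hj
  constructor
  · intro heq
    have hvj : (((k - l) * j : ℕ) : ZMod n) ∈ V.filter
        (fun w => EdgeConn F ((((k - l) * j : ℕ) : ZMod n)) w) :=
      Finset.mem_filter.2 ⟨hEV j hj, Relation.ReflTransGen.refl⟩
    rw [← heq] at hvj
    have hconn : EdgeConn F ((((k - l) * i : ℕ) : ZMod n)) ((((k - l) * j : ℕ) : ZMod n)) :=
      (Finset.mem_filter.1 hvj).2
    have hrel := EdgeConn_to_IRel hF hconn i j hi hj (start_mem_E hlk) (start_mem_E hlk)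
    have : j ∈ comp n k l (XF n k l F) i := mem_comp.2 ⟨hj, hrel⟩
    exact (comp_eq_of_mem this).symm
  · intro heq
    have : j ∈ comp n k l (XF n k l F) i := by
      rw [heq]
      exact mem_comp_self hj
    have hrel := (mem_comp.1 this).2
    exact hclass (IRel_to_EdgeConn hlk hrel)


lemma compCount_empty {V : Type*} [DecidableEq V] :
    compCount (∅ : Finset (Finset V)) = 0 := by
  simp [compCount]

lemma compCount_univ_singleton (n : ℕ) [NeZero n] :
    compCount ({(Finset.univ : Finset (ZMod n))} : Finset (Finset (ZMod n))) = 1 := by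
  classical
  have hconn : ∀ u v : ZMod n,
      EdgeConn ({(Finset.univ : Finset (ZMod n))} : Finset (Finset (ZMod n))) u v :=
    fun u v => Relation.ReflTransGen.single
      ⟨Finset.univ, Finset.mem_singleton_self _, Finset.mem_univ _, Finset.mem_univ _⟩
  rw [compCount]
  have hV : (({(Finset.univ : Finset (ZMod n))} : Finset (Finset (ZMod n))).biUnion id)
      = Finset.univ := by simp
  have himg : ∀ u : ZMod n,
      ((({(Finset.univ : Finset (ZMod n))} : Finset (Finset (ZMod n))).biUnion id).filter
        (fun v => EdgeConn ({(Finset.univ : Finset (ZMod n))} : Finset (Finset (ZMod n))) u v))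
      = (({(Finset.univ : Finset (ZMod n))} : Finset (Finset (ZMod n))).biUnion id) := by
    intro u
    apply Finset.filter_true_of_mem
    intro v hv
    exact hconn u v
  rw [Finset.image_congr (fun u hu => himg u)]
  rw [Finset.image_const (by rw [hV]; exact Finset.univ_nonempty) _]
  exact Finset.card_singleton _

end Stmt4Aux

open Classical in
/-- the number of subhypergraphs of `C_{n,k,ℓ}` (with no isolated
vertices, i.e. given by their edge sets) having exactly `t` edges, all belonging to
`S`, and exactly `c` connected components, is at most `C(k|S|, c) * (2 * 16^k)^t`. -/
theorem stmt4 {n k ℓ : ℕ} (hℓk : ℓ < k) (S : Finset (Finset (ZMod n)))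
    (hS : S ⊆ cycleHG n k ℓ) (t c : ℕ) :
    (S.powerset.filter (fun F => F.card = t ∧ compCount F = c)).card
      ≤ Nat.choose (k * S.card) c * (2 * 16 ^ k) ^ t := by
  classical
  rcases Nat.lt_or_ge k n with hkn | hkn
  · -- main case : k < n
    set T := Stmt4Aux.XF n k ℓ S with hTdef
    have hTrange : T ⊆ Finset.range (n / (k - ℓ)) := Stmt4Aux.XF_range
    have hstep : (S.powerset.filter (fun F => F.card = t ∧ compCount F = c)).card
        ≤ (Stmt4Aux.Fam n k ℓ T t c T.card).card := by
      apply Finset.card_le_card_of_injOn (fun F => Stmt4Aux.XF n k ℓ F)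
      · intro F hF
        simp only [Finset.mem_coe, Finset.mem_filter, Finset.mem_powerset] at hF
        obtain ⟨hFS, hFcard, hFcomp⟩ := hF
        have hFcyc : F ⊆ cycleHG n k ℓ := hFS.trans hS
        apply Stmt4Aux.mem_Fam.2
        refine ⟨?_, ?_, ?_, ?_⟩
        · intro i hi
          rw [Stmt4Aux.mem_XF] at hi ⊢
          exact ⟨hi.1, hFS hi.2⟩
        · rw [Stmt4Aux.XF_card hℓk hkn hFcyc]
          exact hFcard
        · rw [← Stmt4Aux.compCount_eq_icomp hℓk hkn hFcyc]
          exact hFcomp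
        · intro i hi
          apply Stmt4Aux.posT_lt_of_mem
          have h1 := Stmt4Aux.root_comp_mem (n := n) (k := k) (l := ℓ) hi
          have h2 : Stmt4Aux.root k ℓ (Stmt4Aux.comp n k ℓ (Stmt4Aux.XF n k ℓ F) i)
              ∈ Stmt4Aux.XF n k ℓ F := Stmt4Aux.comp_subset h1
          rw [Stmt4Aux.mem_XF] at h2 ⊢
          exact ⟨h2.1, hFS h2.2⟩
      · intro F1 h1 F2 h2 heq
        simp only [Finset.coe_filter, Set.mem_setOf_eq, Finset.mem_powerset] at h1 h2
        have heq' : Stmt4Aux.XF n k ℓ F1 = Stmt4Aux.XF n k ℓ F2 := heq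
        calc F1 = (Stmt4Aux.XF n k ℓ F1).image (Stmt4Aux.E n k ℓ) :=
              (Stmt4Aux.XF_image hℓk (h1.1.trans hS)).symm
        _ = (Stmt4Aux.XF n k ℓ F2).image (Stmt4Aux.E n k ℓ) := by rw [heq']
        _ = F2 := Stmt4Aux.XF_image hℓk (h2.1.trans hS)
    have hmain := Stmt4Aux.main_count hℓk hkn hTrange t c T.card
    have hTcard : T.card = S.card := Stmt4Aux.XF_card hℓk hkn hS
    have hchoose : Nat.choose T.card c ≤ Nat.choose (k * S.card) c := by
      apply Nat.choose_le_choose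
      rw [hTcard]
      calc S.card = 1 * S.card := (Nat.one_mul _).symm
      _ ≤ k * S.card := Nat.mul_le_mul_right _ (by omega)
    have hpow : ((k - 1) / (k - ℓ) + 1) ^ t ≤ (2 * 16 ^ k) ^ t := by
      apply Nat.pow_le_pow_left
      have h1 : (k - 1) / (k - ℓ) ≤ k - 1 := Nat.div_le_self _ _
      have h2 : k < 2 ^ k := Nat.lt_two_pow_self
      have h3 : 2 ^ k ≤ 16 ^ k := Nat.pow_le_pow_left (by norm_num) k
      omega
    calc (S.powerset.filter (fun F => F.card = t ∧ compCount F = c)).card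
        ≤ (Stmt4Aux.Fam n k ℓ T t c T.card).card := hstep
    _ ≤ Nat.choose T.card c * ((k - 1) / (k - ℓ) + 1) ^ t := hmain
    _ ≤ Nat.choose (k * S.card) c * (2 * 16 ^ k) ^ t := Nat.mul_le_mul hchoose hpow
  · -- degenerate case : n ≤ k
    rcases Nat.eq_zero_or_pos n with rfl | hn
    · -- n = 0
      have hc0 : cycleHG 0 k ℓ = ∅ := by
        simp [cycleHG, Nat.zero_div]
      have hS0 : S = ∅ := Finset.subset_empty.1 (by rw [← hc0]; exact hS)
      subst hS0
      rw [Finset.powerset_empty]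
      by_cases hP : ((∅ : Finset (Finset (ZMod 0))).card = t
          ∧ compCount (∅ : Finset (Finset (ZMod 0))) = c)
      · rw [Finset.filter_singleton, if_pos hP]
        obtain ⟨h1, h2⟩ := hP
        rw [Finset.card_empty] at h1
        rw [Stmt4Aux.compCount_empty] at h2
        subst h1
        subst h2
        simp
      · rw [Finset.filter_singleton, if_neg hP]
        simp
    · -- 1 ≤ n ≤ k
      haveI : NeZero n := ⟨by omega⟩
      have hek : ∀ i : ℕ, Stmt4Aux.E n k ℓ i = Finset.univ := by
        intro i
        ext x
        simp only [Finset.mem_univ, iff_true]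
        refine Stmt4Aux.mem_E.2 ⟨(x - (((k - ℓ) * i : ℕ) : ZMod n)).val, ?_, ?_⟩
        · have := ZMod.val_lt (x - (((k - ℓ) * i : ℕ) : ZMod n))
          omega
        · push_cast [ZMod.natCast_val, ZMod.cast_id]
          ring
      have hsub : S ⊆ {Finset.univ} := by
        intro e he
        have h1 := hS he
        rw [Stmt4Aux.cycleHG_eq] at h1
        obtain ⟨i, -, rfl⟩ := Finset.mem_image.1 h1
        rw [hek i]
        exact Finset.mem_singleton_self _
      by_cases hne : (S.powerset.filter (fun F => F.card = t ∧ compCount F = c)).Nonempty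
      · obtain ⟨F, hF⟩ := hne
        simp only [Finset.mem_filter, Finset.mem_powerset] at hF
        obtain ⟨hFS, hFcard, hFcomp⟩ := hF
        have hFsub : F ⊆ {Finset.univ} := hFS.trans hsub
        rcases Finset.subset_singleton_iff.1 hFsub with rfl | rfl
        · -- F = ∅ : t = 0, c = 0
          rw [Finset.card_empty] at hFcard
          rw [Stmt4Aux.compCount_empty] at hFcomp
          subst hFcard
          subst hFcomp
          have hsub1 : S.powerset.filter
              (fun F => F.card = 0 ∧ compCount F = 0) ⊆ {∅} := by
            intro G hG
            simp only [Finset.mem_filter, Finset.mem_powerset] at hG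
            rw [Finset.mem_singleton]
            exact Finset.card_eq_zero.1 hG.2.1
          calc _ ≤ ({∅} : Finset (Finset (Finset (ZMod n)))).card :=
                Finset.card_le_card hsub1
          _ = 1 := Finset.card_singleton _
          _ ≤ _ := by simp
        · -- F = {univ} : t = 1, c = 1
          rw [Finset.card_singleton] at hFcard
          rw [Stmt4Aux.compCount_univ_singleton] at hFcomp
          subst hFcard
          subst hFcomp
          have hsub1 : S.powerset.filter
              (fun F => F.card = 1 ∧ compCount F = 1) ⊆ {{Finset.univ}} := by
            intro G hG
            simp only [Finset.mem_filter, Finset.mem_powerset] at hG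
            rw [Finset.mem_singleton]
            obtain ⟨a, ha⟩ := Finset.card_eq_one.1 hG.2.1
            rw [ha]
            congr 1
            have : a ∈ S := hG.1 (ha ▸ Finset.mem_singleton_self a)
            exact Finset.mem_singleton.1 (hsub this)
          have hScard : 1 ≤ S.card :=
            Finset.card_pos.2 ⟨Finset.univ, hFS (Finset.mem_singleton_self _)⟩
          calc _ ≤ ({{Finset.univ}} : Finset (Finset (Finset (ZMod n)))).card :=
                Finset.card_le_card hsub1
          _ = 1 := Finset.card_singleton _
          _ ≤ _ := by
            have h1 : 1 ≤ Nat.choose (k * S.card) 1 := by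
              rw [Nat.choose_one_right]
              have : 1 * 1 ≤ k * S.card := Nat.mul_le_mul (by omega) hScard
              omega
            have h2 : 1 ≤ (2 * 16 ^ k) ^ 1 := by
              have : 0 < 16 ^ k := pow_pos (by norm_num) k
              rw [pow_one]
              omega
            calc 1 = 1 * 1 := rfl
            _ ≤ _ := Nat.mul_le_mul h1 h2
      · rw [Finset.not_nonempty_iff_eq_empty] at hne
        rw [hne]
        simp
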